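/- arXiv:1505.00369 — 5 statements merged into one kernel-verified Lean document; each statement's English description precedes it below -/
import Mathlib

section
/- Fix positive integers T and M with M ≤ log(T), and let a ≥ (MT/log T)^{1/M}. Then for every Δ > 0, T·Δ·exp(−a^{M−1}Δ²/32) ≤ 32·a·max(1, log(TΔ²/32))/Δ. -/
open Real

set_option maxHeartbeats 1000000

/-- Lemma for the geometric grid: if `M ≤ log T` and
`a ≥ (M T / log T)^{1/M}`, then for every `Δ > 0`,
`T Δ exp(-a^{M-1} Δ² / 32) ≤ 32 a blog(T Δ² / 32) / Δ`. -/
theorem stmt5 (T M : ℕ) (hT : 0 < T) (hM : 0 < M) (hMT : (M : ℝ) ≤ Real.log T)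
    (a : ℝ) (ha : ((M : ℝ) * T / Real.log T) ^ ((1 : ℝ) / M) ≤ a) :
    ∀ Δ : ℝ, 0 < Δ →
      (T : ℝ) * Δ * Real.exp (-(a ^ (M - 1) * Δ ^ 2) / 32) ≤
        32 * a * max 1 (Real.log ((T : ℝ) * Δ ^ 2 / 32)) / Δ := by
  intro Δ hΔ
  have hM1 : (1:ℝ) ≤ (M:ℝ) := by exact_mod_cast hM
  have hT1 : (1:ℝ) ≤ (T:ℝ) := by exact_mod_cast hT
  set t := Real.log T with ht
  have htpos : 0 < t := lt_of_lt_of_le (by exact_mod_cast hM) hMT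
  have ht1 : (1:ℝ) ≤ t := le_trans hM1 hMT
  have hTt : t ≤ (T:ℝ) := Real.log_le_self (by positivity)
  set c := (M:ℝ) * T / t with hc
  have hc1 : (1:ℝ) ≤ c := by
    rw [hc, le_div_iff₀ htpos]
    nlinarith
  have hc0 : (0:ℝ) ≤ c := by linarith
  have ha0 : (0:ℝ) ≤ a := le_trans (Real.rpow_nonneg hc0 _) ha
  have haM : c ≤ a ^ M := by
    calc c = (c ^ ((1:ℝ)/M)) ^ M := by
          rw [← Real.rpow_natCast (c ^ ((1:ℝ)/M)) M, ← Real.rpow_mul hc0,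
            one_div_mul_cancel (by positivity : (M:ℝ) ≠ 0), Real.rpow_one]
      _ ≤ a ^ M := pow_le_pow_left₀ (Real.rpow_nonneg hc0 _) ha M
  have ha1 : (1:ℝ) ≤ a := by
    by_contra hlt
    push_neg at hlt
    have : a ^ M < 1 := pow_lt_one₀ ha0 hlt hM.ne'
    linarith
  have he2 : (2:ℝ) ≤ Real.exp 1 := by nlinarith [Real.add_one_le_exp (1:ℝ)]
  have he0 : (0:ℝ) < Real.exp 1 := Real.exp_pos 1
  -- log t ≤ t / e
  have hlogt : Real.log t ≤ t / Real.exp 1 := by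
    have h1 : Real.log (t / Real.exp 1) ≤ t / Real.exp 1 - 1 :=
      Real.log_le_sub_one_of_pos (by positivity)
    rw [Real.log_div (ne_of_gt htpos) (ne_of_gt he0), Real.log_exp] at h1
    linarith
  -- log a ≥ t / (M e)
  have hloga : t / ((M:ℝ) * Real.exp 1) ≤ Real.log a := by
    have h1 : Real.log c ≤ Real.log (a ^ M) :=
      Real.log_le_log (by linarith) haM
    rw [Real.log_pow] at h1
    have h2 : Real.log ((T:ℝ) / t) ≤ Real.log c := by
      apply Real.log_le_log (by positivity)
      rw [hc]
      exact (div_le_div_iff_of_pos_right htpos).mpr (by nlinarith)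
    rw [Real.log_div (by positivity) (ne_of_gt htpos)] at h2
    -- t - log t ≥ t/e since log t ≤ t/e ≤ t - t/e
    have h3 : t / Real.exp 1 ≤ t - Real.log t := by
      have : t / Real.exp 1 ≤ t / 2 := by
        rw [div_le_div_iff₀ he0 (by norm_num : (0:ℝ) < 2)]
        nlinarith
      nlinarith [hlogt]
    rw [div_le_iff₀ (by positivity)]
    have hMn : (M:ℝ) * Real.log a = (M:ℕ) * Real.log a := by norm_num
    nlinarith [h1, h2, h3]
  set b := a ^ (M - 1) with hbdef
  have hb1 : (1:ℝ) ≤ b := one_le_pow₀ ha1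
  have hb0 : (0:ℝ) < b := by linarith
  have hab : a * b = a ^ M := by
    rw [hbdef, ← pow_succ' a (M-1), Nat.sub_add_cancel hM]
  set x := Δ^2/32 with hx
  have hx0 : 0 < x := by positivity
  set B := max 1 (Real.log ((T : ℝ) * Δ ^ 2 / 32)) with hB
  have hB1 : (1:ℝ) ≤ B := le_max_left _ _
  have hTxeq : (T:ℝ) * Δ^2 / 32 = (T:ℝ) * x := by rw [hx]; ring
  have hB2 : Real.log ((T:ℝ) * x) ≤ B := by
    rw [hB, ← hTxeq]; exact le_max_right _ _
  have key : (T:ℝ) * x * Real.exp (-(b*x)) ≤ a * B := by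
    rcases le_or_gt ((T:ℝ)*x) a with h | h
    · have hexp : Real.exp (-(b*x)) ≤ 1 := by
        rw [Real.exp_le_one_iff]
        nlinarith
      calc (T:ℝ) * x * Real.exp (-(b*x)) ≤ (T:ℝ) * x * 1 := by
            apply mul_le_mul_of_nonneg_left hexp (by positivity)
        _ ≤ a := by linarith
        _ ≤ a * B := le_mul_of_one_le_right ha0 hB1
    · -- B ≥ t/(M e)
      have hBge : t / ((M:ℝ) * Real.exp 1) ≤ B := by
        refine le_trans hloga (le_trans ?_ hB2)
        exact Real.log_le_log (by linarith) h.le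
      -- u e^{-u} ≤ e^{-1} with u = b x
      have hue : b * x * Real.exp (-(b*x)) ≤ Real.exp (-1) := by
        have h1 : b * x ≤ Real.exp (b*x - 1) := by
          nlinarith [Real.add_one_le_exp (b*x - 1)]
        calc b * x * Real.exp (-(b*x)) ≤ Real.exp (b*x-1) * Real.exp (-(b*x)) :=
              mul_le_mul_of_nonneg_right h1 (Real.exp_pos _).le
          _ = Real.exp (-1) := by rw [← Real.exp_add]; ring_nf
      -- T x e^{-bx} ≤ T/(b e)
      have h3 : (b * x * Real.exp (-(b*x))) * Real.exp 1 ≤ 1 := by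
        have := mul_le_mul_of_nonneg_right hue he0.le
        rw [← Real.exp_add] at this
        simpa using this
      have h2 : (T:ℝ) * x * Real.exp (-(b*x)) ≤ (T:ℝ) / (b * Real.exp 1) := by
        rw [le_div_iff₀ (by positivity)]
        have heq : (T:ℝ) * x * Real.exp (-(b*x)) * (b * Real.exp 1)
            = (T:ℝ) * ((b * x * Real.exp (-(b*x))) * Real.exp 1) := by ring
        rw [heq]
        nlinarith [h3]
      -- T/(b e) ≤ a * (t/(M e))
      have hcc : (M:ℝ) * T ≤ a * b * t := by
        rw [hab]
        have h5 := haM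
        rw [hc, div_le_iff₀ htpos] at h5
        nlinarith
      have h4 : (T:ℝ) / (b * Real.exp 1) ≤ a * (t / ((M:ℝ) * Real.exp 1)) := by
        rw [mul_div_assoc', div_le_div_iff₀ (by positivity) (by positivity)]
        nlinarith [mul_le_mul_of_nonneg_right hcc he0.le]
      calc (T:ℝ) * x * Real.exp (-(b*x)) ≤ (T:ℝ) / (b * Real.exp 1) := h2
        _ ≤ a * (t / ((M:ℝ) * Real.exp 1)) := h4
        _ ≤ a * B := mul_le_mul_of_nonneg_left hBge ha0
  rw [le_div_iff₀ hΔ]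
  have harg : -(b * Δ ^ 2) / 32 = -(b * x) := by rw [hx]; ring
  have hlhs : (T:ℝ) * Δ * Real.exp (-(b * Δ ^ 2) / 32) * Δ
      = 32 * ((T:ℝ) * x * Real.exp (-(b*x))) := by
    rw [harg, hx]; ring
  rw [hlhs]
  nlinarith [key]
end

section
/- Fix a ≥ 1, b ≥ e, and define the sequence u_1 = a, u_{k+1} = a·√(u_k / log(b/u_k)). Set S_k = 2 − 2^{−k} for k ≥ 0 and S_k = 0 for k < 0. If M is such that 15·a^{S_{M−2}} ≤ b, then for all k ∈ {1, ..., M−3}, u_k ≥ a^{S_{k−1}} / (15·(log(b/a^{S_{k−2}}))^{S_{k−2}/2}). -/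
open Real
/-- `S k = 2 - 2^{-k}` for `k ≥ 0`, and `S k = 0` for `k < 0`. -/
noncomputable def Sfun (k : ℤ) : ℝ := if k < 0 then 0 else 2 - (2 : ℝ) ^ (-k)

lemma Sfun_of_nonneg {k : ℤ} (h : 0 ≤ k) : Sfun k = 2 - (2:ℝ) ^ (-k) := by
  unfold Sfun; rw [if_neg (by omega)]

lemma two_zpow_le_one {k : ℤ} (h : 0 ≤ k) : (2:ℝ) ^ (-k) ≤ 1 := by
  rw [← zpow_zero (2:ℝ)]
  exact zpow_le_zpow_right₀ (by norm_num) (by omega)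

lemma Sfun_nonneg (k : ℤ) : 0 ≤ Sfun k := by
  unfold Sfun
  split
  · exact le_refl _
  · nlinarith [two_zpow_le_one (k := k) (by omega)]

lemma Sfun_le_two (k : ℤ) : Sfun k ≤ 2 := by
  unfold Sfun
  split
  · norm_num
  · nlinarith [zpow_pos (by norm_num : (0:ℝ) < 2) (-k)]

lemma Sfun_mono {j k : ℤ} (h : j ≤ k) : Sfun j ≤ Sfun k := by
  unfold Sfun
  split <;> split
  · exact le_refl _
  · nlinarith [two_zpow_le_one (k := k) (by omega)]
  · omega
  · have : (2:ℝ) ^ (-k) ≤ (2:ℝ) ^ (-j) := zpow_le_zpow_right₀ (by norm_num) (by omega)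
    linarith

lemma Sfun_rec {k : ℤ} (h : 0 ≤ k) : Sfun k = 1 + Sfun (k - 1) / 2 := by
  rcases eq_or_lt_of_le h with h0 | h1
  · unfold Sfun
    rw [if_neg (by omega), if_pos (by omega), ← h0]
    norm_num
  · rw [Sfun_of_nonneg h, Sfun_of_nonneg (by omega : (0:ℤ) ≤ k - 1)]
    have : (2:ℝ) ^ (-(k-1)) = (2:ℝ) ^ (-k) * 2 := by
      rw [show -(k-1) = -k + 1 by ring, zpow_add₀ (by norm_num : (2:ℝ) ≠ 0), zpow_one]
    rw [this]; ring

lemma Sfun_diff {k : ℤ} (h : 1 ≤ k) : Sfun (k - 1) - Sfun (k - 2) = (2:ℝ) ^ (1 - k) := by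
  rcases eq_or_lt_of_le h with h0 | h1
  · unfold Sfun
    rw [if_neg (by omega), if_pos (by omega), ← h0]
    norm_num
  · rw [Sfun_of_nonneg (by omega : (0:ℤ) ≤ k - 1), Sfun_of_nonneg (by omega : (0:ℤ) ≤ k - 2)]
    have h2 : (2:ℝ) ^ (-(k-2)) = (2:ℝ) ^ (-(k-1)) * 2 := by
      rw [show -(k-2) = -(k-1) + 1 by ring, zpow_add₀ (by norm_num : (2:ℝ) ≠ 0), zpow_one]
    have h3 : (2:ℝ) ^ (1-k) = (2:ℝ) ^ (-(k-1)) := by ring_nf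
    rw [h2, h3]; ring

lemma Sfun_diff_ge {k m : ℤ} (h : 1 ≤ k) (hm : k + 4 ≤ m) :
    (7/8) * (2:ℝ) ^ (1 - k) ≤ Sfun (m - 2) - Sfun (k - 1) := by
  rw [Sfun_of_nonneg (by omega : (0:ℤ) ≤ m - 2), Sfun_of_nonneg (by omega : (0:ℤ) ≤ k - 1)]
  have h1 : (2:ℝ) ^ (-(m-2)) ≤ (2:ℝ) ^ (-(k-1)) * (1/8) := by
    have hle : (2:ℝ) ^ (-(m-2)) ≤ (2:ℝ) ^ (-(k+2)) := zpow_le_zpow_right₀ (by norm_num) (by omega)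
    have h2 : (2:ℝ) ^ (-(k+2)) = (2:ℝ) ^ (-(k-1)) * (1/8) := by
      rw [show -(k+2) = -(k-1) + (-3) by ring, zpow_add₀ (by norm_num : (2:ℝ) ≠ 0)]
      norm_num
    linarith
  have h3 : (2:ℝ) ^ (1-k) = (2:ℝ) ^ (-(k-1)) := by ring_nf
  rw [h3]; linarith

set_option maxHeartbeats 1000000 in
/-- Induction lemma for the minimax grid: with `u₁ = a` and
`u_{k+1} = a √(u_k / log(b / u_k))`, if `15 a^{S_{M-2}} ≤ b` then for all
`k ∈ [1, M-3]`, `u_k ≥ a^{S_{k-1}} / (15 (log (b / a^{S_{k-2}}))^{S_{k-2}/2})`. -/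
theorem stmt6 (a b : ℝ) (ha : 1 ≤ a) (hb : Real.exp 1 ≤ b)
    (u : ℕ → ℝ) (hu1 : u 1 = a)
    (hurec : ∀ k : ℕ, 1 ≤ k → u (k + 1) = a * Real.sqrt (u k / Real.log (b / u k)))
    (M : ℕ) (hM : 15 * a ^ Sfun ((M : ℤ) - 2) ≤ b) :
    ∀ k : ℕ, 1 ≤ k → k ≤ M - 3 →
      a ^ Sfun ((k : ℤ) - 1) /
          (15 * (Real.log (b / a ^ Sfun ((k : ℤ) - 2))) ^ (Sfun ((k : ℤ) - 2) / 2)) ≤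
        u k := by
  have ha0 : (0:ℝ) < a := lt_of_lt_of_le one_pos ha
  have hlog15 : (1:ℝ) ≤ Real.log 15 := by
    rw [Real.le_log_iff_exp_le (by norm_num)]
    have := Real.exp_one_lt_d9
    linarith
  have haj : ∀ j : ℤ, j ≤ (M:ℤ) - 2 → 15 * a ^ Sfun j ≤ b := by
    intro j hj
    have h1 : a ^ Sfun j ≤ a ^ Sfun ((M:ℤ) - 2) :=
      rpow_le_rpow_of_exponent_le ha (Sfun_mono hj)
    nlinarith
  have hb15 : (15:ℝ) ≤ b := by
    have h1 : (1:ℝ) ≤ a ^ Sfun ((M:ℤ) - 2) := one_le_rpow ha (Sfun_nonneg _)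
    nlinarith
  have hb0 : (0:ℝ) < b := by linarith
  have hx : ∀ x : ℝ, 0 < x → 15 * x ≤ b → Real.log 15 ≤ Real.log (b / x) := by
    intro x hx0 hxb
    apply Real.log_le_log (by norm_num)
    rw [le_div_iff₀ hx0]; linarith
  suffices H : ∀ k : ℕ, 1 ≤ k → k ≤ M - 3 →
      0 < u k ∧ u k ≤ a ^ Sfun ((k:ℤ)-1) ∧
      a ^ Sfun ((k : ℤ) - 1) /
          (15 * (Real.log (b / a ^ Sfun ((k : ℤ) - 2))) ^ (Sfun ((k : ℤ) - 2) / 2)) ≤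
        u k by
    intro k hk hkM; exact (H k hk hkM).2.2
  intro k hk
  induction k, hk using Nat.le_induction with
  | base =>
    intro _
    have e1 : ((1:ℕ):ℤ) - 1 = 0 := by norm_num
    have e2 : ((1:ℕ):ℤ) - 2 = -1 := by norm_num
    have hS0 : Sfun 0 = 1 := by unfold Sfun; norm_num
    have hSm1 : Sfun (-1) = 0 := by unfold Sfun; norm_num
    rw [e1, e2, hS0, hSm1, hu1, rpow_one]
    refine ⟨ha0, le_refl a, ?_⟩
    rw [rpow_zero]
    norm_num
    linarith
  | succ k hk IH =>
    intro hM3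
    have hMk : k + 4 ≤ M := by omega
    obtain ⟨hpos, hub, hlb⟩ := IH (by omega)
    have hMkZ : (k:ℤ) + 4 ≤ (M:ℤ) := by exact_mod_cast hMk
    -- cast rewrites in the goal
    have e1 : ((k+1:ℕ):ℤ) - 1 = (k:ℤ) := by push_cast; ring
    have e2 : ((k+1:ℕ):ℤ) - 2 = (k:ℤ) - 1 := by push_cast; ring
    rw [e1, e2]
    set p := Sfun ((k:ℤ) - 1) with hp_def
    set s := Sfun ((k:ℤ) - 2) with hs_def
    set q := Sfun (k:ℤ) with hq_def
    have hp0 : 0 ≤ p := Sfun_nonneg _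
    have hs0 : 0 ≤ s := Sfun_nonneg _
    have hs2 : s ≤ 2 := Sfun_le_two _
    have hsp : s ≤ p := Sfun_mono (by omega)
    have hqp : q = 1 + p / 2 := Sfun_rec (by omega)
    have hps : p = 1 + s / 2 := by
      have := Sfun_rec (by omega : (0:ℤ) ≤ (k:ℤ) - 1)
      rwa [show (k:ℤ) - 1 - 1 = (k:ℤ) - 2 by ring] at this
    set d := (2:ℝ) ^ (1 - (k:ℤ)) with hd_def
    have hd0 : (0:ℝ) < d := zpow_pos (by norm_num) _
    have hdps : p - s = d := Sfun_diff (by exact_mod_cast hk)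
    have hdM : (7/8) * d ≤ Sfun ((M:ℤ) - 2) - p :=
      Sfun_diff_ge (by exact_mod_cast hk) hMkZ
    have hla0 : 0 ≤ Real.log a := Real.log_nonneg ha
    set L := Real.log (b / a ^ s) with hL_def
    set L' := Real.log (b / a ^ p) with hL'_def
    have hapos : ∀ x : ℝ, (0:ℝ) < a ^ x := fun x => rpow_pos_of_pos ha0 x
    have hL_eq : L = Real.log b - s * Real.log a := by
      rw [hL_def, Real.log_div (ne_of_gt hb0) (ne_of_gt (hapos s)), Real.log_rpow ha0]
    have hL'_eq : L' = Real.log b - p * Real.log a := by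
      rw [hL'_def, Real.log_div (ne_of_gt hb0) (ne_of_gt (hapos p)), Real.log_rpow ha0]
    have hL'15 : Real.log 15 ≤ L' := hx _ (hapos p) (haj _ (by omega))
    have hL'pos : (0:ℝ) < L' := by linarith
    have hlogb : Real.log 15 + Sfun ((M:ℤ)-2) * Real.log a ≤ Real.log b := by
      have h1 : Real.log (15 * a ^ Sfun ((M:ℤ)-2)) ≤ Real.log b :=
        Real.log_le_log (by positivity) hM
      rwa [Real.log_mul (by norm_num) (ne_of_gt (hapos _)), Real.log_rpow ha0] at h1
    have hdla : d * Real.log a ≤ (8/7) * L' := by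
      have h1 : (7/8) * d * Real.log a ≤ (Sfun ((M:ℤ)-2) - p) * Real.log a :=
        mul_le_mul_of_nonneg_right (by linarith) hla0
      nlinarith
    have hL'L : L' ≤ L := by
      rw [hL_eq, hL'_eq]; nlinarith
    have hLle : L ≤ (15/7) * L' := by
      have : L = L' + d * Real.log a := by rw [hL_eq, hL'_eq, ← hdps]; ring
      linarith
    have hLpos : (0:ℝ) < L := lt_of_lt_of_le hL'pos hL'L
    have hL1 : (1:ℝ) ≤ L := by linarith
    -- facts about u k
    have hub' : 15 * u k ≤ b := by
      have := haj ((k:ℤ)-1) (by omega)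
      linarith
    have hWu : Real.log 15 ≤ Real.log (b / u k) := hx _ hpos hub'
    have hWupos : (0:ℝ) < Real.log (b / u k) := by linarith
    have hrec : u (k+1) = a * Real.sqrt (u k / Real.log (b / u k)) := hurec k hk
    -- positivity of u (k+1)
    have hpos' : 0 < u (k+1) := by
      rw [hrec]
      exact mul_pos ha0 (Real.sqrt_pos.mpr (div_pos hpos hWupos))
    -- upper bound for u (k+1)
    have hub1 : u (k+1) ≤ a ^ q := by
      rw [hrec, hqp]
      have h1 : u k / Real.log (b / u k) ≤ u k := by
        apply div_le_self hpos.le (by linarith)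
      have h2 : Real.sqrt (u k / Real.log (b / u k)) ≤ Real.sqrt (a ^ p) :=
        Real.sqrt_le_sqrt (le_trans h1 hub)
      have h3 : Real.sqrt (a ^ p) = a ^ (p / 2) := by
        rw [Real.sqrt_eq_rpow, ← Real.rpow_mul ha0.le]
        congr 1; ring
      have h4 : a ^ ((1:ℝ) + p/2) = a * a ^ (p/2) := by
        rw [Real.rpow_add ha0, Real.rpow_one]
      rw [h4, ← h3]
      exact mul_le_mul_of_nonneg_left h2 ha0.le
    refine ⟨hpos', hub1, ?_⟩
    -- lower bound
    set v := a ^ p / (15 * L ^ (s/2)) with hv_def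
    have hv_pos : 0 < v := by
      apply div_pos (hapos p)
      positivity
    set W := Real.log (b / v) with hW_def
    have hWW : Real.log (b / u k) ≤ W := by
      apply Real.log_le_log (div_pos hb0 hpos)
      exact div_le_div_of_nonneg_left hb0.le hv_pos hlb
    have hWpos : 0 < W := lt_of_lt_of_le hWupos hWW
    have hLs2pos : 0 < L ^ (s/2) := rpow_pos_of_pos hLpos _
    have hW_eq : W = L' + Real.log 15 + (s/2) * Real.log L := by
      have hlv : Real.log v = p * Real.log a - (Real.log 15 + (s/2) * Real.log L) := by
        rw [hv_def, Real.log_div (ne_of_gt (hapos p)) (by positivity), Real.log_rpow ha0,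
          Real.log_mul (by norm_num) (ne_of_gt hLs2pos), Real.log_rpow hLpos]
      rw [hW_def, Real.log_div (ne_of_gt hb0) (ne_of_gt hv_pos), hlv, hL'_eq]; ring
    have hlogL : 0 ≤ Real.log L := Real.log_nonneg hL1
    have hWle : W ≤ (29/7) * L' := by
      have h1 : Real.log L ≤ L := Real.log_le_self hLpos.le
      have h2 : (s/2) * Real.log L ≤ 1 * L :=
        mul_le_mul (by linarith) h1 hlogL (by norm_num)
      rw [hW_eq]; linarith
    have hL'sp : 0 < L' ^ (s/2) := rpow_pos_of_pos hL'pos _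
    have hLs2le : L ^ (s/2) ≤ (15/7) * L' ^ (s/2) := by
      have h1 : L ^ (s/2) ≤ ((15/7) * L') ^ (s/2) :=
        rpow_le_rpow hLpos.le hLle (by linarith)
      have h2 : ((15/7 : ℝ) * L') ^ (s/2) = (15/7 : ℝ) ^ (s/2) * L' ^ (s/2) :=
        mul_rpow (by norm_num) hL'pos.le
      have h3 : ((15:ℝ)/7) ^ (s/2) ≤ ((15:ℝ)/7) ^ (1:ℝ) :=
        rpow_le_rpow_of_exponent_le (by norm_num) (by linarith)
      rw [rpow_one] at h3
      calc L ^ (s/2) ≤ (15/7 : ℝ) ^ (s/2) * L' ^ (s/2) := by rw [← h2]; exact h1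
        _ ≤ (15/7) * L' ^ (s/2) := mul_le_mul_of_nonneg_right h3 hL'sp.le
    have hkey : 15 * (L ^ (s/2) * W) ≤ 225 * (L' * L' ^ (s/2)) := by
      have h1 : L ^ (s/2) * W ≤ ((15/7) * L' ^ (s/2)) * ((29/7) * L') :=
        mul_le_mul hLs2le hWle hWpos.le (by positivity)
      have h2 : ((15/7) * L' ^ (s/2)) * ((29/7) * L') = (435/49) * (L' * L' ^ (s/2)) := by
        ring
      have h3 : 0 < L' * L' ^ (s/2) := mul_pos hL'pos hL'sp
      linarith
    have hL'p : L' ^ p = L' * L' ^ (s/2) := by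
      rw [hps, Real.rpow_add hL'pos, Real.rpow_one]
    have hL'p2 : 0 < L' ^ (p/2) := rpow_pos_of_pos hL'pos _
    set v' := a ^ q / (15 * L' ^ (p/2)) with hv'_def
    have hv'pos : 0 < v' := div_pos (hapos q) (by positivity)
    have hAA : a ^ q * a ^ q = a ^ ((2:ℝ) + p) := by
      rw [← Real.rpow_add ha0]; congr 1; rw [hqp]; ring
    have hBB : L' ^ (p/2) * L' ^ (p/2) = L' ^ p := by
      rw [← Real.rpow_add hL'pos]; congr 1; ring
    have ha2 : a ^ (2:ℝ) = a ^ (2:ℕ) := by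
      rw [← Real.rpow_natCast a 2]; norm_num
    have hv'2 : v' ^ 2 = a ^ ((2:ℝ) + p) / (225 * L' ^ p) := by
      rw [hv'_def, div_pow]
      congr 1
      · rw [pow_two]; exact hAA
      · rw [mul_pow, pow_two (L' ^ (p/2)), hBB]; norm_num
    have hva : v * a ^ 2 = a ^ ((2:ℝ) + p) / (15 * L ^ (s/2)) := by
      rw [hv_def, Real.rpow_add ha0, ha2]; ring
    have hsq : (v' / a) ^ 2 ≤ v / W := by
      rw [div_pow, div_le_div_iff₀ (by positivity) hWpos, hv'2, hva]
      rw [div_mul_eq_mul_div, div_le_div_iff₀ (by positivity) (by positivity)]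
      have h2 := mul_le_mul_of_nonneg_left hkey (hapos ((2:ℝ) + p)).le
      rw [hL'p]
      linarith [h2]
    have hfin : v' / a ≤ Real.sqrt (v / W) :=
      (Real.le_sqrt (by positivity) (by positivity)).mpr hsq
    have hmono : v / W ≤ u k / Real.log (b / u k) :=
      div_le_div₀ hpos.le hlb hWupos hWW
    calc v' = a * (v' / a) := by field_simp
      _ ≤ a * Real.sqrt (v / W) := mul_le_mul_of_nonneg_left hfin ha0.le
      _ ≤ a * Real.sqrt (u k / Real.log (b / u k)) :=
          mul_le_mul_of_nonneg_left (Real.sqrt_le_sqrt hmono) ha0.le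
      _ = u (k+1) := hrec.symm
end

section
/- Let S_k = 2 − 2^{−k}. If 2^M ≤ log(4T)/6 and a := (2T)^{1/S_{M−1}} · (log((2T)^{15/(2^M−1)}))^{1/4 − (3/4)/(2^M−1)}, then a^{S_{M−1}} ≥ √(15/(16e)) · T · (log(2T/a^{S_{M−5}}))^{S_{M−3}/4}. -/
open Real

set_option maxHeartbeats 1000000 in
/-- First property of the choice of `a` for the minimax grid:
if `2^M ≤ log(4T)/6` then `a^{S_{M-1}} ≥ √(15/(16e)) T (log(2T/a^{S_{M-5}}))^{S_{M-3}/4}`. -/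
theorem stmt8 (T M : ℕ) (hT : 2 ≤ T) (hM : 2 ≤ M)
    (hMT : (2 : ℝ) ^ M ≤ Real.log (4 * T) / 6) (a : ℝ)
    (ha : a = (2 * (T : ℝ)) ^ (1 / Sfun ((M : ℤ) - 1)) *
        (Real.log ((2 * (T : ℝ)) ^ ((15 : ℝ) / ((2 : ℝ) ^ M - 1)))) ^
          ((1 : ℝ) / 4 - (3 / 4) * (1 / ((2 : ℝ) ^ M - 1)))) :
    Real.sqrt (15 / (16 * Real.exp 1)) * T *
        (Real.log (2 * T / a ^ Sfun ((M : ℤ) - 5))) ^ (Sfun ((M : ℤ) - 3) / 4) ≤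
      a ^ Sfun ((M : ℤ) - 1) := by
  have hT2 : (2:ℝ) ≤ (T:ℝ) := by exact_mod_cast hT
  have h2T : (0:ℝ) < 2 * (T:ℝ) := by linarith
  set x : ℝ := (2:ℝ) ^ M with hxdef
  have hx4 : (4:ℝ) ≤ x := by
    have : (2:ℝ)^2 ≤ (2:ℝ)^M := pow_le_pow_right₀ (by norm_num) hM
    calc (4:ℝ) = 2^2 := by norm_num
      _ ≤ x := this
  have hx0 : (0:ℝ) < x := by positivity
  have hx1 : (1:ℝ) < x := by linarith
  have hxne : x ≠ 0 := ne_of_gt hx0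
  have hx1ne : x - 1 ≠ 0 := by intro h; nlinarith [h]
  set X : ℝ := Real.log (2 * (T:ℝ)) with hXdef
  have hlog4T : Real.log (4 * (T:ℝ)) = Real.log 2 + X := by
    rw [hXdef, show (4:ℝ) * T = 2 * (2 * T) by ring,
      Real.log_mul two_ne_zero (by linarith)]
  have hlog2 : Real.log 2 ≤ 1 := by
    have := Real.log_two_lt_d9; linarith
  have hX6 : 6 * x - 1 ≤ X := by
    have h1 : 6 * x ≤ Real.log (4 * (T:ℝ)) := by
      rw [le_div_iff₀ (by norm_num : (0:ℝ) < 6)] at hMT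
      linarith
    linarith [hlog4T]
  have hX0 : (20:ℝ) ≤ X := by nlinarith
  set L : ℝ := 15 * X / (x - 1) with hLdef
  clear_value L
  clear_value X
  clear_value x
  have hL90 : (90:ℝ) ≤ L := by
    rw [hLdef, le_div_iff₀ (by linarith)]
    nlinarith
  have hL0 : (0:ℝ) < L := by linarith
  have hlogL0 : 0 ≤ Real.log L := Real.log_nonneg (by linarith)
  have hlogLle : Real.log L ≤ L - 1 := Real.log_le_sub_one_of_pos hL0
  -- Sfun values
  have e1 : Sfun ((M:ℤ) - 1) = 2 - 2 / x := by
    have hk : ¬ ((M:ℤ) - 1 < 0) := by omega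
    have h2 : ((2:ℝ)) ^ (-((M:ℤ) - 1)) = 2 / x := by
      have h3 : ((2:ℝ)) ^ ((M:ℤ) - 1) = x / 2 := by
        rw [zpow_sub₀ (two_ne_zero), zpow_natCast, zpow_one, hxdef]
      rw [zpow_neg, h3, inv_div]
    simp only [Sfun, if_neg hk, h2]
  have hs1pos : (0:ℝ) < 2 - 2 / x := by
    have : 2 / x ≤ 2 / 4 := by
      apply div_le_div_of_nonneg_left (by norm_num) (by norm_num) hx4
    linarith
  have ep : Sfun ((M:ℤ) - 3) / 4 = (x - 4) / (2 * x) := by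
    rcases eq_or_lt_of_le hM with h2 | h3
    · have hx : x = 4 := by rw [hxdef, ← h2]; norm_num
      have hk : ((M:ℤ) - 3 < 0) := by omega
      simp only [Sfun, if_pos hk, hx]
      norm_num
    · have hk : ¬ ((M:ℤ) - 3 < 0) := by omega
      have h8 : ((2:ℝ)) ^ (-((M:ℤ) - 3)) = 8 / x := by
        have h3' : ((2:ℝ)) ^ ((M:ℤ) - 3) = x / 8 := by
          rw [zpow_sub₀ (two_ne_zero), zpow_natCast, hxdef]
          norm_num
        rw [zpow_neg, h3', inv_div]
      simp only [Sfun, if_neg hk, h8]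
      field_simp
      ring
  have hp0 : 0 ≤ (x - 4) / (2 * x) := by
    apply div_nonneg (by linarith) (by linarith)
  -- the log of the rpow in ha
  have hLlog : Real.log ((2 * (T:ℝ)) ^ ((15:ℝ) / (x - 1))) = L := by
    rw [Real.log_rpow h2T, hLdef, ← hXdef]
    ring
  set α : ℝ := 1 / (2 - 2 / x) with hαdef
  set β : ℝ := (1:ℝ) / 4 - 3 / 4 * (1 / (x - 1)) with hβdef
  clear_value α β
  have hβ0 : 0 ≤ β := by
    rw [hβdef]
    have : 1 / (x - 1) ≤ 1 / 3 := by
      apply div_le_div_of_nonneg_left (by norm_num) (by norm_num) (by linarith)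
    linarith
  have hβ4 : β ≤ 1 / 4 := by
    rw [hβdef]
    have : 0 ≤ 1 / (x - 1) := div_nonneg (by norm_num) (by linarith)
    linarith
  have ha' : a = (2 * (T:ℝ)) ^ α * L ^ β := by
    rw [ha, e1, hLlog, ← hαdef]
  have haP : 0 < a := by
    rw [ha']
    exact mul_pos (Real.rpow_pos_of_pos h2T _) (Real.rpow_pos_of_pos hL0 _)
  have hloga : Real.log a = α * X + β * Real.log L := by
    rw [ha', Real.log_mul (Real.rpow_pos_of_pos h2T _).ne' (Real.rpow_pos_of_pos hL0 _).ne',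
      Real.log_rpow h2T, Real.log_rpow hL0, ← hXdef]
  -- key identity for a ^ S_{M-1}
  have hkey : a ^ Sfun ((M:ℤ) - 1) = 2 * (T:ℝ) * L ^ ((x - 4) / (2 * x)) := by
    have c1 : α * (2 - 2 / x) = 1 := by
      rw [hαdef]; exact one_div_mul_cancel (ne_of_gt hs1pos)
    have c2 : β * (2 - 2 / x) = (x - 4) / (2 * x) := by
      rw [hβdef]; field_simp; ring
    rw [e1, ha', Real.mul_rpow (Real.rpow_pos_of_pos h2T _).le (Real.rpow_pos_of_pos hL0 _).le,
      ← Real.rpow_mul h2T.le, ← Real.rpow_mul hL0.le, c1, c2, Real.rpow_one]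
  -- bounds on G
  set G : ℝ := Real.log (2 * T / a ^ Sfun ((M:ℤ) - 5)) with hGdef
  clear_value G
  have hGbounds : 0 ≤ G ∧ G ≤ L := by
    rcases le_or_gt M 4 with h4 | h5
    · have hk : ((M:ℤ) - 5 < 0) := by omega
      have hG : G = X := by
        rw [hGdef]
        simp only [Sfun, if_pos hk, Real.rpow_zero, div_one, hXdef]
      have hx16 : x ≤ 16 := by
        rw [hxdef]
        calc (2:ℝ)^M ≤ 2^4 := pow_le_pow_right₀ (by norm_num) h4
          _ = 16 := by norm_num
      constructor
      · rw [hG]; linarith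
      · rw [hG, hLdef, le_div_iff₀ (by linarith)]
        have h := mul_le_mul_of_nonneg_left (show x - 1 ≤ 15 by linarith)
          (show (0:ℝ) ≤ X by linarith)
        linarith [h]
    · have hk : ¬ ((M:ℤ) - 5 < 0) := by omega
      have hx32 : (32:ℝ) ≤ x := by
        rw [hxdef]
        calc (32:ℝ) = 2^5 := by norm_num
          _ ≤ 2^M := pow_le_pow_right₀ (by norm_num) h5
      have e5 : Sfun ((M:ℤ) - 5) = 2 - 32 / x := by
        have h32 : ((2:ℝ)) ^ (-((M:ℤ) - 5)) = 32 / x := by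
          have h3' : ((2:ℝ)) ^ ((M:ℤ) - 5) = x / 32 := by
            rw [zpow_sub₀ (two_ne_zero), zpow_natCast, hxdef]
            norm_num
          rw [zpow_neg, h3', inv_div]
        simp only [Sfun, if_neg hk, h32]
      have hs5a : (2 - 32 / x) * α = (x - 16) / (x - 1) := by
        rw [hαdef, mul_one_div, div_eq_div_iff hs1pos.ne' hx1ne]
        field_simp
        ring
      have hGval : G = L - (2 - 32 / x) * β * Real.log L := by
        rw [hGdef, e5, Real.log_div (ne_of_gt h2T) (ne_of_gt (Real.rpow_pos_of_pos haP _)),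
          Real.log_rpow haP, hloga, ← hXdef]
        have : X - (2 - 32 / x) * (α * X + β * Real.log L)
            = (1 - (2 - 32 / x) * α) * X - (2 - 32 / x) * β * Real.log L := by ring
        rw [show X - (2 - 32 / x) * (α * X + β * Real.log L)
            = (1 - (2 - 32 / x) * α) * X - (2 - 32 / x) * β * Real.log L from by ring,
          hs5a]
        have h15 : 1 - (x - 16) / (x - 1) = 15 / (x - 1) := by
          rw [eq_div_iff hx1ne]
          field_simp
          norm_num
        rw [h15, hLdef]
        ring
      have hc0 : 0 ≤ (2 - 32 / x) * β := by
        apply mul_nonneg _ hβ0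
        have : 32 / x ≤ 32 / 32 := by
          apply div_le_div_of_nonneg_left (by norm_num) (by norm_num) hx32
        norm_num at this
        linarith
      have hc2 : (2 - 32 / x) * β ≤ 1 / 2 := by
        have h1 : (2 - 32 / x) ≤ 2 := by
          have : 0 < 32 / x := by positivity
          linarith
        calc (2 - 32 / x) * β ≤ 2 * (1/4) := by
              apply mul_le_mul h1 hβ4 hβ0 (by norm_num)
          _ = 1 / 2 := by norm_num
      constructor
      · rw [hGval]
        nlinarith [mul_le_mul_of_nonneg_right hc2 hlogL0]
      · rw [hGval]
        nlinarith [mul_nonneg hc0 hlogL0]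
  obtain ⟨hG0, hGL⟩ := hGbounds
  rw [ep, hkey]
  have hGp : G ^ ((x - 4) / (2 * x)) ≤ L ^ ((x - 4) / (2 * x)) :=
    Real.rpow_le_rpow hG0 hGL hp0
  have hsq : Real.sqrt (15 / (16 * Real.exp 1)) ≤ 2 := by
    have he : (1:ℝ) ≤ Real.exp 1 := Real.one_le_exp (by norm_num)
    have h1 : (15:ℝ) / (16 * Real.exp 1) ≤ 4 := by
      rw [div_le_iff₀ (by positivity)]
      nlinarith
    calc Real.sqrt (15 / (16 * Real.exp 1)) ≤ Real.sqrt 4 := Real.sqrt_le_sqrt h1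
      _ = 2 := by
        rw [show (4:ℝ) = 2^2 by norm_num, Real.sqrt_sq (by norm_num)]
  have hTnn : (0:ℝ) ≤ T := by linarith
  calc Real.sqrt (15 / (16 * Real.exp 1)) * T * G ^ ((x - 4) / (2 * x))
      ≤ 2 * T * L ^ ((x - 4) / (2 * x)) := by
        apply mul_le_mul (mul_le_mul hsq le_rfl hTnn (by norm_num)) hGp
          (Real.rpow_nonneg hG0 _) (by positivity)
    _ = 2 * T * L ^ ((x - 4) / (2 * x)) := rfl
end

section
/- Let S_k = 2 − 2^{−k}. If 2^M ≤ log(2T)/6 and a := (2T)^{1/S_{M−1}} · (log((2T)^{15/(2^M−1)}))^{1/4 − (3/4)/(2^M−1)}, then 15·a^{S_{M−2}} ≤ 2T. -/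
open Real

lemma keyA (u : ℝ) (hu : 6 ≤ u) : Real.log (4500 * u) ≤ 2 * u := by
  have hu0 : (0:ℝ) < u := by linarith
  have h1 : Real.log (4500 * u) = Real.log 27000 + Real.log (u / 6) := by
    rw [show (4500:ℝ) * u = 27000 * (u / 6) by ring,
      Real.log_mul (by norm_num) (by positivity)]
  have h2 : Real.log (u / 6) ≤ u / 6 - 1 :=
    Real.log_le_sub_one_of_pos (by positivity)
  have h3 : Real.log 27000 ≤ 12 := by
    have e1 : (2.7:ℝ) ≤ Real.exp 1 := by
      have := Real.exp_one_gt_d9; linarith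
    have hpow : Real.exp 1 ^ (12:ℕ) = Real.exp 12 := by
      rw [← Real.exp_nat_mul]; norm_num
    have h27 : (27000:ℝ) ≤ Real.exp 12 := by
      calc (27000:ℝ) ≤ 2.7 ^ (12:ℕ) := by norm_num
        _ ≤ Real.exp 1 ^ (12:ℕ) := by
            exact pow_le_pow_left₀ (by norm_num) e1 12
        _ = Real.exp 12 := hpow
    exact (Real.log_le_iff_le_exp (by norm_num)).mpr h27
  linarith

set_option maxHeartbeats 1000000 in
/-- Second property of the choice of `a` for the minimax grid:
if `2^M ≤ log(2T)/6` then `15 a^{S_{M-2}} ≤ 2T`. -/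
theorem stmt9 (T M : ℕ) (hT : 2 ≤ T) (hM : 2 ≤ M)
    (hMT : (2 : ℝ) ^ M ≤ Real.log (2 * T) / 6) (a : ℝ)
    (ha : a = (2 * (T : ℝ)) ^ (1 / Sfun ((M : ℤ) - 1)) *
        (Real.log ((2 * (T : ℝ)) ^ ((15 : ℝ) / ((2 : ℝ) ^ M - 1)))) ^
          ((1 : ℝ) / 4 - (3 / 4) * (1 / ((2 : ℝ) ^ M - 1)))) :
    15 * a ^ Sfun ((M : ℤ) - 2) ≤ 2 * T := by
  have hMZ : (2:ℤ) ≤ (M:ℤ) := by exact_mod_cast hM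
  set P : ℝ := (2:ℝ) ^ M with hPdef
  set L : ℝ := Real.log (2 * (T:ℝ)) with hLdef
  have hT4 : (4:ℝ) ≤ 2 * T := by
    have : (2:ℝ) ≤ T := by exact_mod_cast hT
    linarith
  have hTpos : (0:ℝ) < 2 * T := by linarith
  have hP4 : (4:ℝ) ≤ P := by
    calc (4:ℝ) = (2:ℝ) ^ (2:ℕ) := by norm_num
      _ ≤ (2:ℝ) ^ M := pow_le_pow_right₀ (by norm_num) hM
  have hPpos : (0:ℝ) < P := by linarith
  have hL6P : 6 * P ≤ L := by linarith [hMT]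
  have hLpos : (0:ℝ) < L := by linarith
  -- compute Sfun values
  have h2ne : (2:ℝ) ≠ 0 := two_ne_zero
  have hPz : ((2:ℝ) ^ ((M:ℤ))) = P := by rw [zpow_natCast]
  have hS1 : Sfun ((M : ℤ) - 1) = 2 - 2 / P := by
    have hnn : ¬ ((M:ℤ) - 1 < 0) := by omega
    rw [Sfun, if_neg hnn, neg_sub, zpow_sub₀ h2ne, zpow_one, hPz]
  have hS2 : Sfun ((M : ℤ) - 2) = 2 - 4 / P := by
    have hnn : ¬ ((M:ℤ) - 2 < 0) := by omega
    rw [Sfun, if_neg hnn, neg_sub, zpow_sub₀ h2ne, hPz]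
    norm_num
  -- abbreviations
  set q : ℝ := 1 / P with hqdef
  have hq0 : (0:ℝ) < q := by positivity
  have hq4 : q ≤ 1 / 4 := by
    rw [hqdef, div_le_div_iff₀ hPpos (by norm_num)]; linarith
  have hqP : q * P = 1 := by rw [hqdef, one_div, inv_mul_cancel₀ hPpos.ne']
  set r : ℝ := 1 / (P - 1) with hrdef
  have hPm1 : (0:ℝ) < P - 1 := by linarith
  have hr0 : (0:ℝ) < r := by positivity
  have hr3 : r ≤ 1 / 3 := by
    rw [hrdef, div_le_div_iff₀ hPm1 (by norm_num)]; linarith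
  set u : ℝ := q * L with hudef
  have hu6 : (6:ℝ) ≤ u := by
    have : q * (6 * P) ≤ q * L := mul_le_mul_of_nonneg_left hL6P hq0.le
    calc (6:ℝ) = 6 * (q * P) := by rw [hqP]; ring
      _ = q * (6 * P) := by ring
      _ ≤ q * L := this
  have hu0 : (0:ℝ) < u := by linarith
  -- the log of the inner factor
  have hlogarg : Real.log ((2 * (T:ℝ)) ^ ((15 : ℝ) / (P - 1))) = 15 * r * L := by
    rw [Real.log_rpow hTpos, hrdef]; ring
  set G : ℝ := Real.log (15 * r * L) with hGdef
  have hargpos : (0:ℝ) < 15 * r * L := by positivity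
  -- positivity of a and its log
  set S1 : ℝ := 2 - 2 / P with hS1def
  have hS1pos : (0:ℝ) < S1 := by
    rw [hS1def]
    have : 2 / P ≤ 2 / 4 := by
      apply div_le_div_of_nonneg_left (by norm_num) (by norm_num) hP4
    linarith
  set e2 : ℝ := (1 : ℝ) / 4 - (3 / 4) * (1 / ((2:ℝ) ^ M - 1)) with he2def
  have ha' : a = (2 * (T : ℝ)) ^ (1 / S1) * (15 * r * L) ^ e2 := by
    rw [ha, hS1, hlogarg]
  have hapos : 0 < a := by
    rw [ha']
    positivity
  have hloga : Real.log a = (1 / S1) * L + e2 * G := by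
    rw [ha', Real.log_mul (by positivity) (by positivity),
      Real.log_rpow hTpos, Real.log_rpow hargpos, hGdef, hLdef]
  -- reduce to a log inequality
  have h15a : (0:ℝ) < 15 * a ^ Sfun ((M : ℤ) - 2) := by
    positivity
  have hlog15a : Real.log (15 * a ^ Sfun ((M : ℤ) - 2))
      = Real.log 15 + (2 - 4 / P) * ((1 / S1) * L + e2 * G) := by
    rw [Real.log_mul (by norm_num) (by positivity), Real.log_rpow hapos,
      hloga, hS2]
  -- key facts for the final arithmetic
  have hG0 : (0:ℝ) ≤ G := by
    apply Real.log_nonneg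
    have h1 : P - 1 ≤ 15 * L := by nlinarith
    have : (1:ℝ) ≤ 15 / (P - 1) * L := by
      rw [div_mul_eq_mul_div, le_div_iff₀ hPm1]; linarith
    calc (1:ℝ) ≤ 15 / (P - 1) * L := this
      _ = 15 * r * L := by rw [hrdef]; ring
  have hGle : G ≤ Real.log (20 * u) := by
    apply Real.log_le_log hargpos
    have h1 : 15 * r ≤ 20 * q := by
      rw [hrdef, hqdef, mul_one_div, mul_one_div,
        div_le_div_iff₀ hPm1 hPpos]
      linarith
    calc 15 * r * L ≤ 20 * q * L :=
        mul_le_mul_of_nonneg_right h1 hLpos.le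
      _ = 20 * u := by rw [hudef]; ring
  have h225 : Real.log 225 = 2 * Real.log 15 := by
    rw [show (225:ℝ) = 15 ^ (2:ℕ) by norm_num, Real.log_pow]
    norm_num
  have hsplit : Real.log (4500 * u) = Real.log 225 + Real.log (20 * u) := by
    rw [show (4500:ℝ) * u = 225 * (20 * u) by ring,
      Real.log_mul (by norm_num) (by positivity)]
  have hfinal : Real.log 15 + (1 / 2) * Real.log (20 * u) ≤ u := by
    have h1 := keyA u hu6
    linarith
  -- coefficient bounds
  clear_value q r u G
  have hrq : r * (1 - q) = q := by
    rw [hrdef, hqdef]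
    field_simp
  have he2r : e2 = 1 / 4 - 3 / 4 * r := by rw [he2def, hrdef, hPdef]
  have hc0 : (0:ℝ) ≤ (2 - 4 * q) * e2 := by
    rw [he2r]
    nlinarith
  have hc2 : (2 - 4 * q) * e2 ≤ 1 / 2 := by
    rw [he2r]
    nlinarith
  -- budget inequality
  have hbudget : (2 - 4 * q) * ((1 / S1) * L) ≤ L - u := by
    have hS1q : S1 = 2 - 2 * q := by rw [hS1def, hqdef]; ring
    have h1 : (2 - 4 * q) * (1 / S1) ≤ 1 - q := by
      rw [hS1q, mul_one_div, div_le_iff₀ (by nlinarith : (0:ℝ) < 2 - 2 * q)]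
      nlinarith
    calc (2 - 4 * q) * ((1 / S1) * L) = ((2 - 4 * q) * (1 / S1)) * L := by ring
      _ ≤ (1 - q) * L := mul_le_mul_of_nonneg_right h1 hLpos.le
      _ = L - u := by rw [hudef]; ring
  -- combine
  have hq' : 4 / P = 4 * q := by rw [hqdef]; ring
  have hcoeffG : (2 - 4 * q) * (e2 * G) ≤ (1 / 2) * Real.log (20 * u) := by
    calc (2 - 4 * q) * (e2 * G) = ((2 - 4 * q) * e2) * G := by ring
      _ ≤ (1 / 2) * G := mul_le_mul_of_nonneg_right hc2 hG0
      _ ≤ (1 / 2) * Real.log (20 * u) := by linarith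
  have key : Real.log (15 * a ^ Sfun ((M : ℤ) - 2)) ≤ L := by
    rw [hlog15a, hq']
    have expand : (2 - 4 * q) * ((1 / S1) * L + e2 * G)
        = (2 - 4 * q) * ((1 / S1) * L) + (2 - 4 * q) * (e2 * G) := by ring
    rw [expand]
    linarith
  calc 15 * a ^ Sfun ((M : ℤ) - 2)
      = Real.exp (Real.log (15 * a ^ Sfun ((M : ℤ) - 2))) := (Real.exp_log h15a).symm
    _ ≤ Real.exp L := Real.exp_le_exp.mpr key
    _ = 2 * T := Real.exp_log hTpos
end

section
/- Fix a horizon T, a gap Δ ∈ (0,1], and a grid 0 = t_0 < t_1 < ... < t_M = T. For any M-batch policy on the two-armed Gaussian bandit with gap Δ, the regret satisfies R_T(Δ) ≥ Δ ∑_{j=1}^M (t_j − t_{j−1})·(1/4)·exp(−t_{j−1}Δ²/2) (and hence R_T(Δ) ≥ Δ·t_1/4 ≥ 0 in particular, with the paper's version summing t_j in place of t_j − t_{j−1} as an analogous bound). -/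
open MeasureTheory ProbabilityTheory Finset
open scoped ENNReal NNReal

/-- The two Gaussian two-armed bandit environments with gap `Δ` over horizon `T`:
`ω u` lists the (unobserved) rewards of arm 1 and arm 2 at time `u`. Under
`env T Δ true`, arm 1 has law `N(Δ,1)` and arm 2 has law `N(0,1)`; under
`env T Δ false` the roles are swapped, so arm `i` is optimal under `env T Δ i`. -/
noncomputable def env (T : ℕ) (Δ : ℝ) (i : Bool) : Measure (Fin T → ℝ × ℝ) :=
  Measure.pi fun _ =>
    (gaussianReal (if i then Δ else 0) 1).prod (gaussianReal (if i then 0 else Δ) 1)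

/-- The reward observed at time `u` by the policy `π` (`π u ω = true` means arm 1
is pulled at time `u`). -/
def obs {T : ℕ} (π : Fin T → (Fin T → ℝ × ℝ) → Bool) (u : Fin T)
    (ω : Fin T → ℝ × ℝ) : ℝ :=
  if π u ω then (ω u).1 else (ω u).2

/-- The σ-algebra generated by the rewards observed by `π` during the first `k`
rounds. -/
def obsHistory {T : ℕ} (π : Fin T → (Fin T → ℝ × ℝ) → Bool) (k : ℕ) :
    MeasurableSpace (Fin T → ℝ × ℝ) :=
  ⨆ u : Fin T, ⨆ _ : (u : ℕ) < k, MeasurableSpace.comap (obs π u) inferInstance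

namespace Stmt18

variable {T : ℕ} (π : Fin T → (Fin T → ℝ × ℝ) → Bool)

/-- The full observation process. -/
def Obs (ω : Fin T → ℝ × ℝ) : Fin T → ℝ := fun v => obs π v ω

/-- Truncation of an observation record to the first `k` coordinates. -/
def trunc (k : ℕ) (y : Fin T → ℝ) : Fin T → ℝ := fun v => if (v : ℕ) < k then y v else 0

/-- Adaptivity of the policy: each action is a measurable function of strictly
earlier observations. -/
def Adapted : Prop :=
  ∀ v : Fin T, ∃ k ≤ (v : ℕ), ∃ C : Set (Fin T → ℝ), MeasurableSet C ∧
    ∀ ω, π v ω = true ↔ trunc (T := T) k (Obs π ω) ∈ C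

theorem measurable_trunc (k : ℕ) : Measurable (trunc (T := T) k) := by
  apply measurable_pi_lambda
  intro v
  by_cases hv : (v : ℕ) < k
  · simpa only [trunc, if_pos hv] using measurable_pi_apply v
  · simp only [trunc, if_neg hv]; exact measurable_const

theorem trunc_trunc {k' k : ℕ} (h : k' ≤ k) (y : Fin T → ℝ) :
    trunc (T := T) k' (trunc k y) = trunc k' y := by
  funext v
  by_cases hv : (v : ℕ) < k'
  · simp only [trunc, if_pos hv, if_pos (lt_of_lt_of_le hv h)]
  · simp only [trunc, if_neg hv]

/-- Stability: the observations up to time `n` depend only on rewards before `n`. -/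
theorem obs_stable (hA : Adapted π) :
    ∀ n (ω ω' : Fin T → ℝ × ℝ), (∀ w : Fin T, (w : ℕ) < n → ω w = ω' w) →
      ∀ v : Fin T, (v : ℕ) < n → Obs π ω v = Obs π ω' v := by
  intro n
  induction n using Nat.strong_induction_on with
  | _ n IH =>
    intro ω ω' hagree v hv
    obtain ⟨k, hk, C, _, hC⟩ := hA v
    have hObs : ∀ w : Fin T, (w : ℕ) < (v : ℕ) → Obs π ω w = Obs π ω' w := by
      intro w hw
      exact IH (v : ℕ) hv ω ω' (fun u hu => hagree u (hu.trans hv)) w hw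
    have htr : trunc (T := T) k (Obs π ω) = trunc k (Obs π ω') := by
      funext w
      by_cases hw : (w : ℕ) < k
      · simp only [trunc, if_pos hw]
        exact hObs w (lt_of_lt_of_le hw hk)
      · simp only [trunc, if_neg hw]
    have hπ : π v ω = π v ω' := by
      have h1 : (π v ω = true) ↔ (π v ω' = true) := by rw [hC, hC, htr]
      cases hb : π v ω <;> cases hb' : π v ω' <;> simp_all
    show obs π v ω = obs π v ω'
    unfold obs
    rw [hπ, hagree v hv]

/-- The action at time `v` is unchanged by modifying the reward at time `i₀ ≥ v`. -/
theorem pi_update (hA : Adapted π) {i₀ : Fin T} (ω : Fin T → ℝ × ℝ) (x : ℝ × ℝ)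
    {v : Fin T} (hv : (v : ℕ) ≤ (i₀ : ℕ)) :
    π v (Function.update ω i₀ x) = π v ω := by
  obtain ⟨k, hk, C, _, hC⟩ := hA v
  have hagree : ∀ w : Fin T, (w : ℕ) < k → Function.update ω i₀ x w = ω w := by
    intro w hw
    apply Function.update_of_ne
    intro hwe
    rw [hwe] at hw
    omega
  have htr : trunc (T := T) k (Obs π (Function.update ω i₀ x)) = trunc k (Obs π ω) := by
    funext w
    by_cases hw : (w : ℕ) < k
    · simp only [trunc, if_pos hw]
      exact obs_stable π hA k _ _ hagree w hw
    · simp only [trunc, if_neg hw]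
  have h1 : (π v (Function.update ω i₀ x) = true) ↔ (π v ω = true) := by rw [hC, hC, htr]
  cases hb : π v (Function.update ω i₀ x) <;> cases hb' : π v ω <;> simp_all

theorem obs_update (hA : Adapted π) {i₀ : Fin T} (ω : Fin T → ℝ × ℝ) (x : ℝ × ℝ)
    {v : Fin T} (hv : (v : ℕ) < (i₀ : ℕ)) :
    Obs π (Function.update ω i₀ x) v = Obs π ω v := by
  apply obs_stable π hA (i₀ : ℕ) _ _ _ v hv
  intro w hw
  apply Function.update_of_ne
  intro hwe; rw [hwe] at hw; omega

theorem measurable_of_bool {α : Type*} [MeasurableSpace α] {f : α → Bool}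
    (h : MeasurableSet (f ⁻¹' {true})) : Measurable f := by
  apply measurable_to_countable'
  intro b
  cases b
  · have : f ⁻¹' {false} = (f ⁻¹' {true})ᶜ := by
      ext ω; simp
    rw [this]; exact h.compl
  · exact h

theorem meas_pi_obs (hA : Adapted π) :
    ∀ v : Fin T, Measurable (π v) ∧ Measurable fun ω => Obs π ω v := by
  suffices H : ∀ n, ∀ v : Fin T, (v : ℕ) < n →
      Measurable (π v) ∧ Measurable fun ω => Obs π ω v by
    intro v; exact H T v v.isLt
  intro n
  induction n with
  | zero => omega
  | succ n IH =>
    intro v hv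
    by_cases hvn : (v : ℕ) < n
    · exact IH v hvn
    obtain ⟨k, hk, C, hCm, hC⟩ := hA v
    have hktr : Measurable fun ω => trunc (T := T) k (Obs π ω) := by
      apply measurable_pi_lambda
      intro w
      by_cases hw : (w : ℕ) < k
      · have hmw : Measurable fun ω => Obs π ω w := (IH w (by omega)).2
        simpa only [trunc, if_pos hw] using hmw
      · simp only [trunc, if_neg hw]; exact measurable_const
    have hπ : Measurable (π v) := by
      apply measurable_of_bool
      have : π v ⁻¹' {true} = (fun ω => trunc (T := T) k (Obs π ω)) ⁻¹' C := by
        ext ω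
        simp only [Set.mem_preimage, Set.mem_singleton_iff]
        exact hC ω
      rw [this]
      exact hktr hCm
    refine ⟨hπ, ?_⟩
    have : (fun ω => Obs π ω v) = fun ω => if π v ω = true then (ω v).1 else (ω v).2 := by
      funext ω; simp [Obs, obs]
    rw [this]
    have hset : MeasurableSet {a | π v a = true} := by
      exact hπ (measurableSet_singleton true)
    exact Measurable.ite hset (measurable_pi_apply v).fst (measurable_pi_apply v).snd

theorem measurable_Obs (hA : Adapted π) : Measurable (Obs π) :=
  measurable_pi_lambda _ fun v => (meas_pi_obs π hA v).2

theorem comap_const_bot {α β : Type*} [m : MeasurableSpace β] (c : β) :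
    MeasurableSpace.comap (fun _ : α => c) m = ⊥ := by
  apply le_antisymm _ bot_le
  intro s hs
  obtain ⟨s', _, rfl⟩ := hs
  rw [MeasurableSpace.measurableSet_bot_iff]
  by_cases hc : c ∈ s'
  · right; ext a; simp [hc]
  · left; ext a; simp [hc]

theorem obsHistory_eq (k : ℕ) :
    obsHistory π k
      = MeasurableSpace.comap (fun ω => trunc (T := T) k (Obs π ω)) inferInstance := by
  have hpi : (inferInstance : MeasurableSpace (Fin T → ℝ))
      = ⨆ v : Fin T, MeasurableSpace.comap (fun y : Fin T → ℝ => y v) inferInstance := rfl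
  rw [hpi, MeasurableSpace.comap_iSup]
  unfold obsHistory
  apply iSup_congr
  intro v
  rw [MeasurableSpace.comap_comp]
  have hcomp : ((fun y : Fin T → ℝ => y v) ∘ fun ω => trunc (T := T) k (Obs π ω))
      = fun ω => if (v : ℕ) < k then obs π v ω else 0 := by
    funext ω; simp [trunc, Obs, Function.comp]
  rw [hcomp]
  by_cases hv : (v : ℕ) < k
  · rw [iSup_pos hv]
    congr 1
    funext ω; rw [if_pos hv]
  · rw [iSup_neg hv]
    have : (fun ω : Fin T → ℝ × ℝ => if (v : ℕ) < k then obs π v ω else 0)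
        = fun _ => (0 : ℝ) := by funext ω; rw [if_neg hv]
    rw [this, comap_const_bot]

/-- One-coordinate Fubini for product probability measures. -/
theorem lintegral_update_pi (μ : Fin T → Measure (ℝ × ℝ))
    [∀ i, IsProbabilityMeasure (μ i)] {g : (Fin T → ℝ × ℝ) → ℝ≥0∞}
    (hg : Measurable g) (i : Fin T) :
    ∫⁻ ω, g ω ∂Measure.pi μ
      = ∫⁻ ω, ∫⁻ x, g (Function.update ω i x) ∂μ i ∂Measure.pi μ := by
  classical
  have hh : Measurable fun ω => ∫⁻ x, g (Function.update ω i x) ∂μ i :=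
    Measurable.lintegral_prod_right' (hg.comp measurable_update')
  set x₀ : Fin T → ℝ × ℝ := fun _ => (0, 0) with hx₀
  rw [lintegral_eq_lmarginal_univ (f := g) x₀,
    lintegral_eq_lmarginal_univ (f := fun ω => ∫⁻ x, g (Function.update ω i x) ∂μ i) x₀,
    lmarginal_erase' _ hg (mem_univ i), lmarginal_erase' _ hh (mem_univ i)]
  congr 1
  funext x
  have h2 : ∀ xᵢ : ℝ × ℝ, (∫⁻ y, g (Function.update (Function.update x i xᵢ) i y) ∂μ i)
      = ∫⁻ y, g (Function.update x i y) ∂μ i := fun xᵢ => by simp_rw [Function.update_idem]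
  simp_rw [h2]
  rw [lintegral_const, measure_univ, mul_one]


/-- Likelihood ratio of `N(Δ,1)` against `N(0,1)`. -/
noncomputable def lr (Δ x : ℝ) : ℝ≥0∞ := ENNReal.ofReal (Real.exp (Δ * x - Δ ^ 2 / 2))

theorem measurable_lr (Δ : ℝ) : Measurable (lr Δ) :=
  ENNReal.measurable_ofReal.comp
    (Real.measurable_exp.comp ((measurable_id.const_mul Δ).sub_const _))

theorem gaussianPDFReal_mul_exp (Δ x : ℝ) :
    gaussianPDFReal 0 1 x * Real.exp (Δ * x - Δ ^ 2 / 2) = gaussianPDFReal Δ 1 x := by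
  unfold gaussianPDFReal
  push_cast
  have h : Real.exp (-(x - 0) ^ 2 / (2 * 1)) * Real.exp (Δ * x - Δ ^ 2 / 2)
      = Real.exp (-(x - Δ) ^ 2 / (2 * 1)) := by
    rw [← Real.exp_add]
    congr 1
    ring
  calc (√(2 * Real.pi * 1))⁻¹ * Real.exp (-(x - 0) ^ 2 / (2 * 1)) * Real.exp (Δ * x - Δ ^ 2 / 2)
      = (√(2 * Real.pi * 1))⁻¹
          * (Real.exp (-(x - 0) ^ 2 / (2 * 1)) * Real.exp (Δ * x - Δ ^ 2 / 2)) := by ring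
    _ = (√(2 * Real.pi * 1))⁻¹ * Real.exp (-(x - Δ) ^ 2 / (2 * 1)) := by rw [h]

theorem gaussianPDF_mul_lr (Δ x : ℝ) :
    gaussianPDF 0 1 x * lr Δ x = gaussianPDF Δ 1 x := by
  unfold gaussianPDF lr
  rw [← ENNReal.ofReal_mul (gaussianPDFReal_nonneg 0 1 x)]
  congr 1
  exact gaussianPDFReal_mul_exp Δ x

theorem lintegral_gaussian_shift (Δ : ℝ) {f : ℝ → ℝ≥0∞} (hf : Measurable f) :
    ∫⁻ x, f x ∂gaussianReal Δ 1
      = ∫⁻ x, f x * lr Δ x ∂gaussianReal 0 1 := by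
  rw [gaussianReal_of_var_ne_zero Δ one_ne_zero, gaussianReal_of_var_ne_zero 0 one_ne_zero,
    lintegral_withDensity_eq_lintegral_mul _ (measurable_gaussianPDF _ _) hf,
    lintegral_withDensity_eq_lintegral_mul _ (measurable_gaussianPDF _ _)
      (g := fun x => f x * lr Δ x) (hf.mul (measurable_lr Δ))]
  congr 1
  funext x
  show gaussianPDF Δ 1 x * f x = gaussianPDF 0 1 x * (f x * lr Δ x)
  rw [← mul_assoc, mul_comm (gaussianPDF 0 1 x) (f x), mul_assoc, gaussianPDF_mul_lr, mul_comm]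

theorem lintegral_exp_gaussian (a c : ℝ) :
    ∫⁻ x, ENNReal.ofReal (Real.exp (a * x + c)) ∂gaussianReal 0 1
      = ENNReal.ofReal (Real.exp (a ^ 2 / 2 + c)) := by
  rw [gaussianReal_of_var_ne_zero 0 one_ne_zero,
    lintegral_withDensity_eq_lintegral_mul _ (measurable_gaussianPDF _ _)
      (show Measurable fun x : ℝ => ENNReal.ofReal (Real.exp (a * x + c)) by fun_prop)]
  have hpt : (gaussianPDF 0 1 * fun x => ENNReal.ofReal (Real.exp (a * x + c)))
      = fun x => ENNReal.ofReal (Real.exp (a ^ 2 / 2 + c)) * gaussianPDF a 1 x := by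
    funext x
    show gaussianPDF 0 1 x * ENNReal.ofReal (Real.exp (a * x + c)) = _
    unfold gaussianPDF
    rw [← ENNReal.ofReal_mul (gaussianPDFReal_nonneg 0 1 x),
      ← ENNReal.ofReal_mul (Real.exp_nonneg _)]
    congr 1
    unfold gaussianPDFReal
    push_cast
    have h : Real.exp (-(x - 0) ^ 2 / (2 * 1)) * Real.exp (a * x + c)
        = Real.exp (a ^ 2 / 2 + c) * Real.exp (-(x - a) ^ 2 / (2 * 1)) := by
      rw [← Real.exp_add, ← Real.exp_add]
      congr 1
      ring
    calc (√(2 * Real.pi * 1))⁻¹ * Real.exp (-(x - 0) ^ 2 / (2 * 1)) * Real.exp (a * x + c)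
        = (√(2 * Real.pi * 1))⁻¹
            * (Real.exp (-(x - 0) ^ 2 / (2 * 1)) * Real.exp (a * x + c)) := by ring
      _ = (√(2 * Real.pi * 1))⁻¹
            * (Real.exp (a ^ 2 / 2 + c) * Real.exp (-(x - a) ^ 2 / (2 * 1))) := by rw [h]
      _ = Real.exp (a ^ 2 / 2 + c)
            * ((√(2 * Real.pi * 1))⁻¹ * Real.exp (-(x - a) ^ 2 / (2 * 1))) := by ring
  rw [hpt, lintegral_const_mul _ (measurable_gaussianPDF a 1),
    lintegral_gaussianPDF_eq_one a one_ne_zero, mul_one]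

theorem lintegral_lr_one (Δ : ℝ) : ∫⁻ x, lr Δ x ∂gaussianReal 0 1 = 1 := by
  have h : lr Δ = fun x => ENNReal.ofReal (Real.exp (Δ * x + (-(Δ ^ 2) / 2))) := by
    funext x; unfold lr; congr 1; ring
  rw [h, lintegral_exp_gaussian]
  have : Δ ^ 2 / 2 + -(Δ ^ 2) / 2 = 0 := by ring
  rw [this, Real.exp_zero, ENNReal.ofReal_one]

theorem lintegral_fst {μ ρ : Measure ℝ} [IsProbabilityMeasure μ] [IsProbabilityMeasure ρ]
    {f : ℝ → ℝ≥0∞} (hf : Measurable f) :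
    ∫⁻ p : ℝ × ℝ, f p.1 ∂μ.prod ρ = ∫⁻ x, f x ∂μ := by
  rw [lintegral_prod (fun p : ℝ × ℝ => f p.1) (hf.comp measurable_fst).aemeasurable]
  simp [lintegral_const]

theorem lintegral_snd {μ ρ : Measure ℝ} [IsProbabilityMeasure μ] [IsProbabilityMeasure ρ]
    {f : ℝ → ℝ≥0∞} (hf : Measurable f) :
    ∫⁻ p : ℝ × ℝ, f p.2 ∂μ.prod ρ = ∫⁻ x, f x ∂ρ := by
  rw [lintegral_prod (fun p : ℝ × ℝ => f p.2) (hf.comp measurable_snd).aemeasurable]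
  simp [lintegral_const]

/-- Integrating a function of the selected coordinate against one bandit-environment
reward pair. -/
theorem inner_eval (Δ : ℝ) {φ₀ : ℝ → ℝ≥0∞} (hφ₀ : Measurable φ₀) (b i : Bool) :
    ∫⁻ x : ℝ × ℝ, φ₀ (if b then x.1 else x.2)
        ∂((gaussianReal (if i then Δ else 0) 1).prod (gaussianReal (if i then 0 else Δ) 1))
      = ∫⁻ s, φ₀ s * (if b = i then lr Δ s else 1) ∂gaussianReal 0 1 := by
  cases b <;> cases i <;>
    simp only [if_true, if_false, Bool.false_eq_true, Bool.true_eq_false, cond_true, cond_false]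
  · -- b = false, i = false : snd coordinate, mean Δ
    rw [lintegral_snd hφ₀, lintegral_gaussian_shift Δ hφ₀]
  · -- b = false, i = true : snd coordinate, mean 0
    rw [lintegral_snd hφ₀]
    simp
  · -- b = true, i = false : fst coordinate, mean 0
    rw [lintegral_fst hφ₀]
    simp
  · -- b = true, i = true : fst coordinate, mean Δ
    rw [lintegral_fst hφ₀, lintegral_gaussian_shift Δ hφ₀]

theorem inner_eval0 {φ₀ : ℝ → ℝ≥0∞} (hφ₀ : Measurable φ₀) (b : Bool) :
    ∫⁻ x : ℝ × ℝ, φ₀ (if b then x.1 else x.2)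
        ∂((gaussianReal 0 1).prod (gaussianReal 0 1))
      = ∫⁻ s, φ₀ s ∂gaussianReal 0 1 := by
  cases b
  · simpa using lintegral_snd (ρ := gaussianReal 0 1) hφ₀
  · simpa using lintegral_fst (μ := gaussianReal 0 1) hφ₀


/-- Reference measure: both arms standard normal. -/
noncomputable def QT (T : ℕ) : Measure (Fin T → ℝ × ℝ) :=
  Measure.pi fun _ => (gaussianReal 0 1).prod (gaussianReal 0 1)

instance : IsProbabilityMeasure (QT T) := by unfold QT; infer_instance

instance (T : ℕ) (Δ : ℝ) (i : Bool) : IsProbabilityMeasure (env T Δ i) := by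
  unfold env; infer_instance

/-- The observed-likelihood-ratio weight over the first `k` rounds. -/
noncomputable def G (Δ : ℝ) (i : Bool) (k : ℕ) (ω : Fin T → ℝ × ℝ) : ℝ≥0∞ :=
  ∏ m ∈ Finset.range k, if h : m < T then
    (if π ⟨m, h⟩ ω = i then lr Δ (Obs π ω ⟨m, h⟩) else 1) else 1

theorem measurable_G (hA : Adapted π) (Δ : ℝ) (i : Bool) (k : ℕ) :
    Measurable (G π Δ i k) := by
  apply Finset.measurable_prod
  intro m _
  by_cases h : m < T
  · simp only [dif_pos h]
    have hset : MeasurableSet {ω | π ⟨m, h⟩ ω = i} :=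
      (meas_pi_obs π hA ⟨m, h⟩).1 (measurableSet_singleton i)
    exact Measurable.ite hset
      ((measurable_lr Δ).comp (meas_pi_obs π hA ⟨m, h⟩).2) measurable_const
  · simp only [dif_neg h]
    exact measurable_const

theorem G_succ (Δ : ℝ) (i : Bool) (k : ℕ) (h : k < T) (ω : Fin T → ℝ × ℝ) :
    G π Δ i (k + 1) ω
      = G π Δ i k ω * (if π ⟨k, h⟩ ω = i then lr Δ (Obs π ω ⟨k, h⟩) else 1) := by
  unfold G
  rw [prod_range_succ, dif_pos h]

theorem G_update (hA : Adapted π) (Δ : ℝ) (i : Bool) {k : ℕ} (h : k < T)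
    (ω : Fin T → ℝ × ℝ) (x : ℝ × ℝ) :
    G π Δ i k (Function.update ω ⟨k, h⟩ x) = G π Δ i k ω := by
  unfold G
  apply Finset.prod_congr rfl
  intro m hm
  rw [Finset.mem_range] at hm
  have hmT : m < T := by omega
  rw [dif_pos hmT, dif_pos hmT,
    pi_update π hA ω x (v := ⟨m, hmT⟩) (by simpa using hm.le),
    obs_update π hA ω x (v := ⟨m, hmT⟩) (by simpa using hm)]

theorem change_of_measure (Δ : ℝ) (hA : Adapted π) (i : Bool) :
    ∀ k, k ≤ T → ∀ φ : (Fin T → ℝ) → ℝ≥0∞, Measurable φ →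
      ∫⁻ ω, φ (trunc (T := T) k (Obs π ω)) ∂env T Δ i
        = ∫⁻ ω, φ (trunc (T := T) k (Obs π ω)) * G π Δ i k ω ∂QT T := by
  intro k
  induction k with
  | zero =>
    intro _ φ _
    have h0 : ∀ ω : Fin T → ℝ × ℝ, trunc (T := T) 0 (Obs π ω) = fun _ => (0 : ℝ) := by
      intro ω; funext v; simp [trunc]
    have hG : ∀ ω : Fin T → ℝ × ℝ, G π Δ i 0 ω = 1 := by intro ω; simp [G]
    simp_rw [h0, hG, mul_one]
    rw [lintegral_const, lintegral_const, measure_univ, measure_univ]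
  | succ k IH =>
    intro hk1 φ hφ
    classical
    have hkT : k < T := hk1
    set i₀ : Fin T := ⟨k, hkT⟩ with hi₀
    obtain ⟨k', hk', C, hCm, hC⟩ := hA i₀
    have hk'k : k' ≤ k := hk'
    set D : Set (Fin T → ℝ) :=
      cond i (trunc (T := T) k' ⁻¹' C) ((trunc (T := T) k' ⁻¹' C)ᶜ) with hD
    have hDm : MeasurableSet D := by
      rw [hD]
      cases i
      · exact ((measurable_trunc k') hCm).compl
      · exact (measurable_trunc k') hCm
    have hbD : ∀ ω, (π i₀ ω = i) ↔ trunc (T := T) k (Obs π ω) ∈ D := by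
      intro ω
      have htt : trunc (T := T) k' (trunc (T := T) k (Obs π ω)) = trunc k' (Obs π ω) :=
        trunc_trunc hk'k _
      cases i
      · have hff : (π i₀ ω = false) ↔ ¬ (π i₀ ω = true) := by
          cases π i₀ ω <;> simp
        rw [hD]
        show _ ↔ trunc (T := T) k (Obs π ω) ∈ (trunc (T := T) k' ⁻¹' C)ᶜ
        rw [Set.mem_compl_iff, Set.mem_preimage, htt, hff, hC]
      · rw [hD]
        show _ ↔ trunc (T := T) k (Obs π ω) ∈ trunc (T := T) k' ⁻¹' C
        rw [Set.mem_preimage, htt]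
        exact hC ω
    set φ' : (Fin T → ℝ) → ℝ≥0∞ :=
      fun y => ∫⁻ s, φ (Function.update y i₀ s) * (if y ∈ D then lr Δ s else 1)
        ∂gaussianReal 0 1 with hφ'def
    have hφ'm : Measurable φ' := by
      rw [hφ'def]
      exact Measurable.lintegral_prod_right'
        (f := fun p : (Fin T → ℝ) × ℝ =>
          φ (Function.update p.1 i₀ p.2) * (if p.1 ∈ D then lr Δ p.2 else 1))
        ((hφ.comp measurable_update').mul
          (Measurable.ite (measurable_fst hDm) ((measurable_lr Δ).comp measurable_snd)
            measurable_const))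
    have hπupd : ∀ (ω : Fin T → ℝ × ℝ) x, π i₀ (Function.update ω i₀ x) = π i₀ ω :=
      fun ω x => pi_update π hA ω x le_rfl
    have hObsupd : ∀ (ω : Fin T → ℝ × ℝ) x (v : Fin T), (v : ℕ) < k →
        Obs π (Function.update ω i₀ x) v = Obs π ω v :=
      fun ω x v hv => obs_update π hA ω x hv
    have hObsi₀ : ∀ (ω : Fin T → ℝ × ℝ) x,
        Obs π (Function.update ω i₀ x) i₀ = (if π i₀ ω then x.1 else x.2) := by
      intro ω x
      show (if π i₀ (Function.update ω i₀ x) then (Function.update ω i₀ x i₀).1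
        else (Function.update ω i₀ x i₀).2) = _
      rw [hπupd, Function.update_self]
    have htrupd : ∀ (ω : Fin T → ℝ × ℝ) x, trunc (T := T) (k + 1) (Obs π (Function.update ω i₀ x))
        = Function.update (trunc (T := T) k (Obs π ω)) i₀ (if π i₀ ω then x.1 else x.2) := by
      intro ω x
      funext v
      by_cases hv : v = i₀
      · subst hv
        rw [Function.update_self]
        show (if ((i₀ : ℕ)) < k + 1 then Obs π (Function.update ω i₀ x) i₀ else 0) = _
        rw [if_pos (by simp [hi₀])]
        exact hObsi₀ ω x
      · rw [Function.update_of_ne hv]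
        have hvk : (v : ℕ) ≠ k := fun hh => hv (Fin.ext (by simp [hi₀, hh]))
        show (if (v : ℕ) < k + 1 then Obs π (Function.update ω i₀ x) v else 0)
          = (if (v : ℕ) < k then Obs π ω v else 0)
        by_cases hvlt : (v : ℕ) < k
        · rw [if_pos (by omega), if_pos hvlt, hObsupd ω x v hvlt]
        · rw [if_neg (by omega), if_neg hvlt]
    have hGupd : ∀ (ω : Fin T → ℝ × ℝ) x,
        G π Δ i k (Function.update ω i₀ x) = G π Δ i k ω :=
      fun ω x => G_update π hA Δ i hkT ω x
    have hmeastrunc : ∀ j, Measurable fun ω => trunc (T := T) j (Obs π ω) :=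
      fun j => (measurable_trunc j).comp (measurable_Obs π hA)
    have hmf1 : Measurable fun ω => φ (trunc (T := T) (k + 1) (Obs π ω)) :=
      hφ.comp (hmeastrunc _)
    have hcond : ∀ (ω : Fin T → ℝ × ℝ) s,
        (if (π i₀ ω) = i then lr Δ s else 1)
          = (if trunc (T := T) k (Obs π ω) ∈ D then lr Δ s else 1) := by
      intro ω s
      by_cases hb : π i₀ ω = i
      · rw [if_pos hb, if_pos ((hbD ω).mp hb)]
      · rw [if_neg hb, if_neg (fun hmem => hb ((hbD ω).mpr hmem))]
    have hLHS : ∫⁻ ω, φ (trunc (T := T) (k + 1) (Obs π ω)) ∂env T Δ i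
        = ∫⁻ ω, φ' (trunc (T := T) k (Obs π ω)) ∂env T Δ i := by
      show ∫⁻ ω, φ (trunc (T := T) (k + 1) (Obs π ω))
          ∂Measure.pi (fun _ : Fin T =>
            (gaussianReal (if i then Δ else 0) 1).prod (gaussianReal (if i then 0 else Δ) 1)) = _
      rw [lintegral_update_pi _ hmf1 i₀]
      congr 1
      funext ω
      calc ∫⁻ x, φ (trunc (T := T) (k + 1) (Obs π (Function.update ω i₀ x)))
              ∂((gaussianReal (if i then Δ else 0) 1).prod (gaussianReal (if i then 0 else Δ) 1))
          = ∫⁻ x : ℝ × ℝ, (fun s => φ (Function.update (trunc (T := T) k (Obs π ω)) i₀ s))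
              (if π i₀ ω then x.1 else x.2)
              ∂((gaussianReal (if i then Δ else 0) 1).prod (gaussianReal (if i then 0 else Δ) 1)) := by
            congr 1; funext x; rw [htrupd ω x]
        _ = ∫⁻ s, φ (Function.update (trunc (T := T) k (Obs π ω)) i₀ s)
              * (if (π i₀ ω) = i then lr Δ s else 1) ∂gaussianReal 0 1 :=
            inner_eval Δ (hφ.comp (measurable_update _)) (π i₀ ω) i
        _ = φ' (trunc (T := T) k (Obs π ω)) := by
            rw [hφ'def]
            dsimp only
            congr 1
            funext s
            rw [hcond ω s]
    have hmf2 : Measurable fun ω =>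
        φ (trunc (T := T) (k + 1) (Obs π ω)) * G π Δ i (k + 1) ω :=
      hmf1.mul (measurable_G π hA Δ i (k + 1))
    have hRHS : ∫⁻ ω, φ (trunc (T := T) (k + 1) (Obs π ω)) * G π Δ i (k + 1) ω ∂QT T
        = ∫⁻ ω, φ' (trunc (T := T) k (Obs π ω)) * G π Δ i k ω ∂QT T := by
      show ∫⁻ ω, φ (trunc (T := T) (k + 1) (Obs π ω)) * G π Δ i (k + 1) ω
          ∂Measure.pi (fun _ : Fin T => (gaussianReal 0 1).prod (gaussianReal 0 1)) = _
      rw [lintegral_update_pi _ hmf2 i₀]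
      congr 1
      funext ω
      have hψm : Measurable fun s => φ (Function.update (trunc (T := T) k (Obs π ω)) i₀ s)
          * (if (π i₀ ω) = i then lr Δ s else 1) := by
        apply (hφ.comp (measurable_update _)).mul
        by_cases hb : (π i₀ ω) = i
        · simpa only [if_pos hb] using measurable_lr Δ
        · simpa only [if_neg hb] using (measurable_const : Measurable fun _ : ℝ => (1 : ℝ≥0∞))
      calc ∫⁻ x, φ (trunc (T := T) (k + 1) (Obs π (Function.update ω i₀ x)))
              * G π Δ i (k + 1) (Function.update ω i₀ x)
              ∂((gaussianReal 0 1).prod (gaussianReal 0 1))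
          = ∫⁻ x : ℝ × ℝ, G π Δ i k ω
              * ((fun s => φ (Function.update (trunc (T := T) k (Obs π ω)) i₀ s)
                  * (if (π i₀ ω) = i then lr Δ s else 1)) (if π i₀ ω then x.1 else x.2))
              ∂((gaussianReal 0 1).prod (gaussianReal 0 1)) := by
            congr 1
            funext x
            rw [htrupd ω x, G_succ π Δ i k hkT, hGupd ω x]
            show φ _ * (G π Δ i k ω * (if π i₀ (Function.update ω i₀ x) = i
                then lr Δ (Obs π (Function.update ω i₀ x) i₀) else 1)) = _
            rw [hπupd ω x, hObsi₀ ω x]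
            ring
        _ = G π Δ i k ω * ∫⁻ x : ℝ × ℝ,
              (fun s => φ (Function.update (trunc (T := T) k (Obs π ω)) i₀ s)
                  * (if (π i₀ ω) = i then lr Δ s else 1)) (if π i₀ ω then x.1 else x.2)
              ∂((gaussianReal 0 1).prod (gaussianReal 0 1)) := by
            rw [lintegral_const_mul]
            exact hψm.comp (Measurable.ite
              (by
                have : MeasurableSet {x : ℝ × ℝ | π i₀ ω = true} := by
                  by_cases hb : π i₀ ω = true <;> simp [hb]
                exact this) measurable_fst measurable_snd)
        _ = G π Δ i k ω * ∫⁻ s, φ (Function.update (trunc (T := T) k (Obs π ω)) i₀ s)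
              * (if (π i₀ ω) = i then lr Δ s else 1) ∂gaussianReal 0 1 := by
            rw [inner_eval0 hψm (π i₀ ω)]
        _ = φ' (trunc (T := T) k (Obs π ω)) * G π Δ i k ω := by
            rw [hφ'def]
            dsimp only
            have : (∫⁻ s, φ (Function.update (trunc (T := T) k (Obs π ω)) i₀ s)
                * (if (π i₀ ω) = i then lr Δ s else 1) ∂gaussianReal 0 1)
              = ∫⁻ s, φ (Function.update (trunc (T := T) k (Obs π ω)) i₀ s)
                * (if trunc (T := T) k (Obs π ω) ∈ D then lr Δ s else 1) ∂gaussianReal 0 1 := by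
              congr 1; funext s; rw [hcond ω s]
            rw [this, mul_comm]
    rw [hLHS, hRHS, IH (by omega) φ' hφ'm]


theorem lintegral_G_one (Δ : ℝ) (hA : Adapted π) (i : Bool) {k : ℕ} (hk : k ≤ T) :
    ∫⁻ ω, G π Δ i k ω ∂QT T = 1 := by
  have h := change_of_measure π Δ hA i k hk (fun _ => 1) measurable_const
  simp only [one_mul] at h
  rw [← h, lintegral_const, measure_univ, mul_one]

/-- Observations under the reference measure behave like an i.i.d. standard
normal sequence, for products of per-round functions. -/
theorem lintegral_prod_obs (hA : Adapted π) {ψ : ℝ → ℝ≥0∞} (hψ : Measurable ψ) :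
    ∀ k, k ≤ T →
      ∫⁻ ω, ∏ m ∈ Finset.range k,
          (if h : m < T then ψ (Obs π ω ⟨m, h⟩) else 1) ∂QT T
        = (∫⁻ s, ψ s ∂gaussianReal 0 1) ^ k := by
  intro k
  induction k with
  | zero => simp
  | succ k IH =>
    intro hk1
    have hkT : k < T := hk1
    set i₀ : Fin T := ⟨k, hkT⟩ with hi₀
    have hm1 : ∀ m, m < k → ∀ (h : m < T), Measurable fun ω => ψ (Obs π ω ⟨m, h⟩) :=
      fun m _ h => hψ.comp (meas_pi_obs π hA ⟨m, h⟩).2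
    have hmeasF : Measurable fun ω => ∏ m ∈ Finset.range (k + 1),
        (if h : m < T then ψ (Obs π ω ⟨m, h⟩) else 1) := by
      apply Finset.measurable_prod
      intro m hm
      rw [Finset.mem_range] at hm
      have h : m < T := by omega
      simpa only [dif_pos h, Function.comp_def] using hψ.comp (meas_pi_obs π hA ⟨m, h⟩).2
    show ∫⁻ ω, ∏ m ∈ Finset.range (k + 1),
        (if h : m < T then ψ (Obs π ω ⟨m, h⟩) else 1)
        ∂Measure.pi (fun _ : Fin T => (gaussianReal 0 1).prod (gaussianReal 0 1)) = _
    rw [lintegral_update_pi _ hmeasF i₀]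
    have hπupd : ∀ (ω : Fin T → ℝ × ℝ) x, π i₀ (Function.update ω i₀ x) = π i₀ ω :=
      fun ω x => pi_update π hA ω x le_rfl
    have hObsi₀ : ∀ (ω : Fin T → ℝ × ℝ) x,
        Obs π (Function.update ω i₀ x) i₀ = (if π i₀ ω then x.1 else x.2) := by
      intro ω x
      show (if π i₀ (Function.update ω i₀ x) then (Function.update ω i₀ x i₀).1
        else (Function.update ω i₀ x i₀).2) = _
      rw [hπupd, Function.update_self]
    have hstep : ∀ ω : Fin T → ℝ × ℝ,
        (∫⁻ x, ∏ m ∈ Finset.range (k + 1),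
            (if h : m < T then ψ (Obs π (Function.update ω i₀ x) ⟨m, h⟩) else 1)
          ∂((gaussianReal 0 1).prod (gaussianReal 0 1)))
        = (∏ m ∈ Finset.range k, (if h : m < T then ψ (Obs π ω ⟨m, h⟩) else 1))
            * ∫⁻ s, ψ s ∂gaussianReal 0 1 := by
      intro ω
      have hrw : ∀ x : ℝ × ℝ, (∏ m ∈ Finset.range (k + 1),
            (if h : m < T then ψ (Obs π (Function.update ω i₀ x) ⟨m, h⟩) else 1))
          = (∏ m ∈ Finset.range k, (if h : m < T then ψ (Obs π ω ⟨m, h⟩) else 1))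
              * (fun s => ψ s) (if π i₀ ω then x.1 else x.2) := by
        intro x
        rw [Finset.prod_range_succ, dif_pos hkT]
        congr 1
        · apply Finset.prod_congr rfl
          intro m hm
          rw [Finset.mem_range] at hm
          have h : m < T := by omega
          rw [dif_pos h, dif_pos h, obs_update π hA ω x (v := ⟨m, h⟩) (by simpa using hm)]
        · rw [hObsi₀ ω x]
      simp_rw [hrw]
      rw [lintegral_const_mul]
      · congr 1
        exact inner_eval0 hψ (π i₀ ω)
      · exact hψ.comp (Measurable.ite
          (by
            by_cases hb : π i₀ ω = true <;> simp [hb]) measurable_fst measurable_snd)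
    simp_rw [hstep]
    rw [lintegral_mul_const]
    · rw [show (Measure.pi fun _ : Fin T => (gaussianReal 0 1).prod (gaussianReal 0 1))
          = QT T from rfl, IH (by omega), pow_succ]
    · apply Finset.measurable_prod
      intro m hm
      rw [Finset.mem_range] at hm
      have h : m < T := by omega
      simpa only [dif_pos h, Function.comp_def] using hψ.comp (meas_pi_obs π hA ⟨m, h⟩).2

/-- Per-round two-point lower bound (Bretagnolle–Huber). -/
theorem per_round (Δ : ℝ) (hA : Adapted π) {k : ℕ} (hk : k ≤ T) (u : Fin T)
    (hu : ∃ S : Set (Fin T → ℝ), MeasurableSet S ∧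
      ∀ ω, π u ω = true ↔ trunc (T := T) k (Obs π ω) ∈ S) :
    (1 / 2 : ℝ) * Real.exp (-((k : ℝ) * Δ ^ 2) / 2)
      ≤ ((env T Δ true) {ω | π u ω ≠ true}).toReal
        + ((env T Δ false) {ω | π u ω ≠ false}).toReal := by
  classical
  obtain ⟨S, hSm, hS⟩ := hu
  set γ : Measure ℝ := gaussianReal 0 1 with hγ
  set G₁ := G π Δ true k with hG₁
  set G₂ := G π Δ false k with hG₂
  have hmG₁ : Measurable G₁ := measurable_G π hA Δ true k
  have hmG₂ : Measurable G₂ := measurable_G π hA Δ false k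
  -- identify the two regret probabilities as integrals against QT
  set φ₁ : (Fin T → ℝ) → ℝ≥0∞ := fun y => if y ∈ S then 0 else 1 with hφ₁
  set φ₂ : (Fin T → ℝ) → ℝ≥0∞ := fun y => if y ∈ S then 1 else 0 with hφ₂
  have hmφ₁ : Measurable φ₁ := Measurable.ite hSm measurable_const measurable_const
  have hmφ₂ : Measurable φ₂ := Measurable.ite hSm measurable_const measurable_const
  have hset1 : MeasurableSet {ω | π u ω ≠ true} := by
    have := (meas_pi_obs π hA u).1 (measurableSet_singleton true)
    exact this.compl
  have hset2 : MeasurableSet {ω | π u ω ≠ false} := by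
    have := (meas_pi_obs π hA u).1 (measurableSet_singleton false)
    exact this.compl
  have hind1 : ∀ ω : Fin T → ℝ × ℝ, φ₁ (trunc (T := T) k (Obs π ω))
      = Set.indicator {ω | π u ω ≠ true} (1 : (Fin T → ℝ × ℝ) → ℝ≥0∞) ω := by
    intro ω
    rw [hφ₁, Set.indicator_apply, Pi.one_apply]
    by_cases hb : π u ω = true
    · simp only [if_pos ((hS ω).mp hb)]
      rw [if_neg (by simpa using hb)]
    · simp only [if_neg (fun hmem => hb ((hS ω).mpr hmem))]
      rw [if_pos (by simpa using hb)]
  have hind2 : ∀ ω : Fin T → ℝ × ℝ, φ₂ (trunc (T := T) k (Obs π ω))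
      = Set.indicator {ω | π u ω ≠ false} (1 : (Fin T → ℝ × ℝ) → ℝ≥0∞) ω := by
    intro ω
    rw [hφ₂, Set.indicator_apply, Pi.one_apply]
    by_cases hb : π u ω = true
    · simp only [if_pos ((hS ω).mp hb)]
      rw [if_pos (by simp [hb])]
    · simp only [if_neg (fun hmem => hb ((hS ω).mpr hmem))]
      have : π u ω = false := by cases hbb : π u ω <;> simp_all
      rw [if_neg (by simp [this])]
  have hP1 : (env T Δ true) {ω | π u ω ≠ true}
      = ∫⁻ ω, φ₁ (trunc (T := T) k (Obs π ω)) * G₁ ω ∂QT T := by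
    rw [← change_of_measure π Δ hA true k hk φ₁ hmφ₁]
    simp_rw [hind1]
    rw [lintegral_indicator_one hset1]
  have hP2 : (env T Δ false) {ω | π u ω ≠ false}
      = ∫⁻ ω, φ₂ (trunc (T := T) k (Obs π ω)) * G₂ ω ∂QT T := by
    rw [← change_of_measure π Δ hA false k hk φ₂ hmφ₂]
    simp_rw [hind2]
    rw [lintegral_indicator_one hset2]
  -- lower bound the sum by the integral of the minimum
  have hmin : ∫⁻ ω, min (G₁ ω) (G₂ ω) ∂QT T
      ≤ (env T Δ true) {ω | π u ω ≠ true} + (env T Δ false) {ω | π u ω ≠ false} := by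
    have hm1' : Measurable fun ω => φ₁ (trunc (T := T) k (Obs π ω)) * G₁ ω :=
      (hmφ₁.comp ((measurable_trunc k).comp (measurable_Obs π hA))).mul hmG₁
    rw [hP1, hP2, ← lintegral_add_left hm1']
    apply lintegral_mono
    intro ω
    dsimp only
    by_cases hmem : trunc (T := T) k (Obs π ω) ∈ S
    · have h1 : φ₁ (trunc (T := T) k (Obs π ω)) = 0 := by rw [hφ₁]; simp [hmem]
      have h2 : φ₂ (trunc (T := T) k (Obs π ω)) = 1 := by rw [hφ₂]; simp [hmem]
      rw [h1, h2, zero_mul, one_mul, zero_add]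
      exact min_le_right _ _
    · have h1 : φ₁ (trunc (T := T) k (Obs π ω)) = 1 := by rw [hφ₁]; simp [hmem]
      have h2 : φ₂ (trunc (T := T) k (Obs π ω)) = 0 := by rw [hφ₂]; simp [hmem]
      rw [h1, h2, zero_mul, one_mul, add_zero]
      exact min_le_left _ _
  -- Cauchy-Schwarz
  set A := ∫⁻ ω, min (G₁ ω) (G₂ ω) ∂QT T with hA'
  set B := ∫⁻ ω, max (G₁ ω) (G₂ ω) ∂QT T with hB'
  have hBle : B ≤ 2 := by
    rw [hB']
    calc ∫⁻ ω, max (G₁ ω) (G₂ ω) ∂QT T ≤ ∫⁻ ω, G₁ ω + G₂ ω ∂QT T := by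
          apply lintegral_mono
          intro ω
          exact max_le le_self_add le_add_self
      _ = 2 := by
          rw [lintegral_add_left hmG₁, lintegral_G_one π Δ hA true hk,
            lintegral_G_one π Δ hA false hk]
          norm_num
  have hCS : ∫⁻ ω, (G₁ ω * G₂ ω) ^ (1 / 2 : ℝ) ∂QT T ≤ A ^ (1 / 2 : ℝ) * B ^ (1 / 2 : ℝ) := by
    have h22 : (2 : ℝ).HolderConjugate 2 := Real.HolderConjugate.two_two
    have hpt : ∀ ω : Fin T → ℝ × ℝ, (G₁ ω * G₂ ω) ^ (1 / 2 : ℝ)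
        = ((fun ω => min (G₁ ω) (G₂ ω) ^ (1 / 2 : ℝ))
            * fun ω => max (G₁ ω) (G₂ ω) ^ (1 / 2 : ℝ)) ω := by
      intro ω
      show _ = min (G₁ ω) (G₂ ω) ^ (1 / 2 : ℝ) * max (G₁ ω) (G₂ ω) ^ (1 / 2 : ℝ)
      rw [← ENNReal.mul_rpow_of_nonneg _ _ (by norm_num : (0:ℝ) ≤ 1/2)]
      rcases le_total (G₁ ω) (G₂ ω) with h | h
      · rw [min_eq_left h, max_eq_right h]
      · rw [min_eq_right h, max_eq_left h, mul_comm]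
    calc ∫⁻ ω, (G₁ ω * G₂ ω) ^ (1 / 2 : ℝ) ∂QT T
        = ∫⁻ ω, ((fun ω => min (G₁ ω) (G₂ ω) ^ (1 / 2 : ℝ))
            * fun ω => max (G₁ ω) (G₂ ω) ^ (1 / 2 : ℝ)) ω ∂QT T := by
          congr 1; funext ω; exact hpt ω
      _ ≤ (∫⁻ ω, (min (G₁ ω) (G₂ ω) ^ (1 / 2 : ℝ)) ^ (2:ℝ) ∂QT T) ^ (1/(2:ℝ))
            * (∫⁻ ω, (max (G₁ ω) (G₂ ω) ^ (1 / 2 : ℝ)) ^ (2:ℝ) ∂QT T) ^ (1/(2:ℝ)) :=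
          ENNReal.lintegral_mul_le_Lp_mul_Lq _ h22
            ((hmG₁.min hmG₂).pow_const _).aemeasurable
            ((hmG₁.max hmG₂).pow_const _).aemeasurable
      _ = A ^ (1 / 2 : ℝ) * B ^ (1 / 2 : ℝ) := by
          have hhalf : ∀ x : ℝ≥0∞, (x ^ (1 / 2 : ℝ)) ^ (2:ℝ) = x := by
            intro x
            rw [← ENNReal.rpow_mul]
            norm_num
          simp_rw [hhalf]
          rfl
  -- compute the Hellinger-type integral
  have hGG : ∀ ω : Fin T → ℝ × ℝ, (G₁ ω * G₂ ω) ^ (1 / 2 : ℝ)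
      = ∏ m ∈ Finset.range k, (if h : m < T then
          ENNReal.ofReal (Real.exp ((Δ / 2) * Obs π ω ⟨m, h⟩ + (-(Δ ^ 2) / 4))) else 1) := by
    intro ω
    rw [hG₁, hG₂]
    unfold G
    rw [← Finset.prod_mul_distrib]
    have hfac : ∀ m, (if h : m < T then
          (if π ⟨m, h⟩ ω = true then lr Δ (Obs π ω ⟨m, h⟩) else 1) else 1)
        * (if h : m < T then
          (if π ⟨m, h⟩ ω = false then lr Δ (Obs π ω ⟨m, h⟩) else 1) else 1)
        = (if h : m < T then lr Δ (Obs π ω ⟨m, h⟩) else 1) := by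
      intro m
      by_cases h : m < T
      · rw [dif_pos h, dif_pos h, dif_pos h]
        cases hb : π ⟨m, h⟩ ω <;> simp [hb]
      · rw [dif_neg h, dif_neg h, dif_neg h, mul_one]
    simp_rw [hfac]
    rw [← ENNReal.prod_rpow_of_nonneg (by norm_num : (0:ℝ) ≤ 1/2)]
    apply Finset.prod_congr rfl
    intro m _
    by_cases h : m < T
    · rw [dif_pos h, dif_pos h]
      unfold lr
      rw [ENNReal.ofReal_rpow_of_pos (Real.exp_pos _), ← Real.exp_mul]
      congr 2
      ring
    · rw [dif_neg h, dif_neg h, ENNReal.one_rpow]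
  have hhell : ∫⁻ ω, (G₁ ω * G₂ ω) ^ (1 / 2 : ℝ) ∂QT T
      = ENNReal.ofReal (Real.exp (-((k : ℝ) * Δ ^ 2) / 8)) := by
    have hψm : Measurable fun s => ENNReal.ofReal (Real.exp ((Δ / 2) * s + (-(Δ ^ 2) / 4))) := by
      fun_prop
    calc ∫⁻ ω, (G₁ ω * G₂ ω) ^ (1 / 2 : ℝ) ∂QT T
        = ∫⁻ ω, ∏ m ∈ Finset.range k, (if h : m < T then
            ENNReal.ofReal (Real.exp ((Δ / 2) * Obs π ω ⟨m, h⟩ + (-(Δ ^ 2) / 4))) else 1)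
            ∂QT T := by
          congr 1; funext ω; exact hGG ω
      _ = (∫⁻ s, ENNReal.ofReal (Real.exp ((Δ / 2) * s + (-(Δ ^ 2) / 4))) ∂gaussianReal 0 1) ^ k :=
          lintegral_prod_obs π hA hψm k hk
      _ = ENNReal.ofReal (Real.exp (-((k : ℝ) * Δ ^ 2) / 8)) := by
          rw [lintegral_exp_gaussian]
          rw [← ENNReal.ofReal_pow (Real.exp_nonneg _), ← Real.exp_nat_mul]
          congr 1
          ring
  -- put everything together in ℝ≥0∞
  have h2A : ENNReal.ofReal (Real.exp (-((k : ℝ) * Δ ^ 2) / 4)) ≤ A * 2 := by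
    have hXle : ENNReal.ofReal (Real.exp (-((k : ℝ) * Δ ^ 2) / 8))
        ≤ A ^ (1 / 2 : ℝ) * (2 : ℝ≥0∞) ^ (1 / 2 : ℝ) := by
      rw [← hhell]
      refine hCS.trans ?_
      exact mul_le_mul_right (ENNReal.rpow_le_rpow hBle (by norm_num)) _
    have hsq := mul_le_mul' hXle hXle
    calc ENNReal.ofReal (Real.exp (-((k : ℝ) * Δ ^ 2) / 4))
        = ENNReal.ofReal (Real.exp (-((k : ℝ) * Δ ^ 2) / 8))
            * ENNReal.ofReal (Real.exp (-((k : ℝ) * Δ ^ 2) / 8)) := by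
          rw [← ENNReal.ofReal_mul (Real.exp_nonneg _), ← Real.exp_add]
          congr 2
          ring
      _ ≤ (A ^ (1 / 2 : ℝ) * (2 : ℝ≥0∞) ^ (1 / 2 : ℝ))
            * (A ^ (1 / 2 : ℝ) * (2 : ℝ≥0∞) ^ (1 / 2 : ℝ)) := hsq
      _ = A * 2 := by
          have hhalf : ∀ x : ℝ≥0∞, x ^ (1 / 2 : ℝ) * x ^ (1 / 2 : ℝ) = x := by
            intro x
            rw [← ENNReal.rpow_add_of_nonneg _ _ (by norm_num) (by norm_num)]
            norm_num
          calc (A ^ (1 / 2 : ℝ) * (2 : ℝ≥0∞) ^ (1 / 2 : ℝ))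
                * (A ^ (1 / 2 : ℝ) * (2 : ℝ≥0∞) ^ (1 / 2 : ℝ))
              = (A ^ (1 / 2 : ℝ) * A ^ (1 / 2 : ℝ))
                * ((2 : ℝ≥0∞) ^ (1 / 2 : ℝ) * (2 : ℝ≥0∞) ^ (1 / 2 : ℝ)) := by ring
            _ = A * 2 := by rw [hhalf, hhalf]
  -- conclude in ℝ
  set p₁ := (env T Δ true) {ω | π u ω ≠ true} with hp₁
  set p₂ := (env T Δ false) {ω | π u ω ≠ false} with hp₂
  have hp₁top : p₁ ≠ ⊤ := (measure_ne_top _ _)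
  have hp₂top : p₂ ≠ ⊤ := (measure_ne_top _ _)
  have hfinal : ENNReal.ofReal (Real.exp (-((k : ℝ) * Δ ^ 2) / 4)) ≤ (p₁ + p₂) * 2 :=
    h2A.trans (mul_le_mul_left hmin _)
  have hreal : Real.exp (-((k : ℝ) * Δ ^ 2) / 4) ≤ (p₁.toReal + p₂.toReal) * 2 := by
    have h1 := ENNReal.toReal_mono (by
      exact ENNReal.mul_ne_top (by simp [hp₁top, hp₂top]) (by norm_num)) hfinal
    rw [ENNReal.toReal_ofReal (Real.exp_nonneg _)] at h1
    rw [ENNReal.toReal_mul, ENNReal.toReal_add hp₁top hp₂top] at h1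
    simpa using h1
  have hexp : Real.exp (-((k : ℝ) * Δ ^ 2) / 2) ≤ Real.exp (-((k : ℝ) * Δ ^ 2) / 4) := by
    apply Real.exp_le_exp.mpr
    have : (0 : ℝ) ≤ (k : ℝ) * Δ ^ 2 := by positivity
    linarith
  linarith

end Stmt18

open Stmt18 in
/-- Lower bound on the worst-case regret of any `M`-batch policy on the two-armed
Gaussian bandit with gap `Δ`: for some environment, the regret is at least
`Δ ∑_{j=1}^M (t_j - t_{j-1}) (1/4) exp(-t_{j-1} Δ² / 2)`. A policy is `M`-batch for
the grid `0 = t₀ < t₁ < ... < t_M = T` if its action at each time in batch `m`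
(i.e., with `t_{m-1} ≤ u < t_m` in 0-indexed time) is measurable with respect to the
rewards observed strictly before the batch. -/
theorem stmt18 (T M : ℕ) (hT : 1 ≤ T) (hM : 1 ≤ M)
    (Δ : ℝ) (hΔ : Δ ∈ Set.Ioc (0 : ℝ) 1)
    (t : ℕ → ℕ) (h0 : t 0 = 0) (hTM : t M = T) (hmono : ∀ j < M, t j < t (j + 1))
    (π : Fin T → (Fin T → ℝ × ℝ) → Bool)
    (hbatch : ∀ m ∈ Finset.Icc 1 M, ∀ u : Fin T,
      t (m - 1) ≤ (u : ℕ) → (u : ℕ) < t m →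
        Measurable[obsHistory π (t (m - 1))] (π u)) :
    Δ * ∑ j ∈ Finset.Icc 1 M, ((t j : ℝ) - (t (j - 1) : ℝ)) * (1 / 4) *
        Real.exp (-((t (j - 1) : ℝ) * Δ ^ 2) / 2) ≤
      max (Δ * ∑ u : Fin T, ((env T Δ true) {ω | π u ω ≠ true}).toReal)
        (Δ * ∑ u : Fin T, ((env T Δ false) {ω | π u ω ≠ false}).toReal) := by
  classical
  have hΔ0 : 0 < Δ := hΔ.1
  have htmono : ∀ a b, a ≤ b → b ≤ M → t a ≤ t b := by
    intro a b hab hbM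
    induction b with
    | zero =>
      have ha : a = 0 := by omega
      rw [ha]
    | succ b ih =>
      rcases Nat.eq_or_lt_of_le hab with h | h
      · rw [h]
      · exact le_trans (ih (by omega) (by omega)) (le_of_lt (hmono b (by omega)))
  have hTle : ∀ j, j ≤ M → t j ≤ T := fun j hj => hTM ▸ htmono j M hj le_rfl
  have hbatchex : ∀ n, n < T → ∃ m, 1 ≤ m ∧ m ≤ M ∧ t (m - 1) ≤ n ∧ n < t m := by
    intro n hn
    have hE : ∃ m, n < t m := ⟨M, by omega⟩
    refine ⟨Nat.find hE, ?_, Nat.find_le (by omega), ?_, Nat.find_spec hE⟩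
    · rcases Nat.eq_zero_or_pos (Nat.find hE) with h | h
      · exfalso
        have := Nat.find_spec hE
        rw [h, h0] at this
        omega
      · exact h
    · by_contra hcon
      push_neg at hcon
      have h1 : 1 ≤ Nat.find hE := by
        rcases Nat.eq_zero_or_pos (Nat.find hE) with h | h
        · exfalso
          have := Nat.find_spec hE
          rw [h, h0] at this
          omega
        · exact h
      exact Nat.find_min hE (by omega) hcon
  have hrep : ∀ m : ℕ, 1 ≤ m → m ≤ M → ∀ u : Fin T, t (m - 1) ≤ (u : ℕ) → (u : ℕ) < t m →
      ∃ S : Set (Fin T → ℝ), MeasurableSet S ∧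
        ∀ ω, π u ω = true ↔ trunc (T := T) (t (m - 1)) (Obs π ω) ∈ S := by
    intro m h1 h2 u hu1 hu2
    have hmeas := hbatch m (Finset.mem_Icc.mpr ⟨h1, h2⟩) u hu1 hu2
    rw [obsHistory_eq] at hmeas
    have hset := hmeas (measurableSet_singleton true)
    obtain ⟨S, hSm, hSeq⟩ := MeasurableSpace.measurableSet_comap.mp hset
    refine ⟨S, hSm, fun ω => ?_⟩
    constructor
    · intro h
      have hmem : ω ∈ π u ⁻¹' {true} := h
      rw [← hSeq] at hmem
      exact hmem
    · intro h
      have hmem : ω ∈ (fun ω => trunc (T := T) (t (m - 1)) (Obs π ω)) ⁻¹' S := h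
      rw [hSeq] at hmem
      exact hmem
  have hA : Adapted π := by
    intro v
    obtain ⟨m, hm1, hm2, hm3, hm4⟩ := hbatchex (v : ℕ) v.isLt
    obtain ⟨S, hSm, hSiff⟩ := hrep m hm1 hm2 v hm3 hm4
    exact ⟨t (m - 1), hm3, S, hSm, hSiff⟩
  set e₁ : ℕ → ℝ := fun n =>
    if h : n < T then ((env T Δ true) {ω | π ⟨n, h⟩ ω ≠ true}).toReal else 0 with he₁
  set e₂ : ℕ → ℝ := fun n =>
    if h : n < T then ((env T Δ false) {ω | π ⟨n, h⟩ ω ≠ false}).toReal else 0 with he₂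
  have hs1 : (∑ u : Fin T, ((env T Δ true) {ω | π u ω ≠ true}).toReal)
      = ∑ n ∈ Finset.range T, e₁ n := by
    rw [← Fin.sum_univ_eq_sum_range e₁ T]
    apply Finset.sum_congr rfl
    intro u _
    rw [he₁]
    simp only [dif_pos u.isLt, Fin.eta]
  have hs2 : (∑ u : Fin T, ((env T Δ false) {ω | π u ω ≠ false}).toReal)
      = ∑ n ∈ Finset.range T, e₂ n := by
    rw [← Fin.sum_univ_eq_sum_range e₂ T]
    apply Finset.sum_congr rfl
    intro u _
    rw [he₂]
    simp only [dif_pos u.isLt, Fin.eta]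
  have hdec : ∀ f : ℕ → ℝ, ∑ n ∈ Finset.range T, f n
      = ∑ j ∈ Finset.Icc 1 M, ∑ n ∈ Finset.Ico (t (j - 1)) (t j), f n := by
    intro f
    have key : ∀ m, m ≤ M → ∑ n ∈ Finset.range (t m), f n
        = ∑ j ∈ Finset.Icc 1 m, ∑ n ∈ Finset.Ico (t (j - 1)) (t j), f n := by
      intro m
      induction m with
      | zero => intro _; simp [h0]
      | succ m ih =>
        intro hm
        have hins : Finset.Icc 1 (m + 1) = insert (m + 1) (Finset.Icc 1 m) := by
          ext x
          simp only [Finset.mem_Icc, Finset.mem_insert]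
          omega
        rw [hins, Finset.sum_insert (by simp), ← ih (by omega)]
        have h2 : (m + 1) - 1 = m := rfl
        rw [h2, Finset.range_eq_Ico,
          ← Finset.sum_Ico_consecutive f (Nat.zero_le (t m)) (le_of_lt (hmono m (by omega)))]
        rw [Finset.range_eq_Ico]; ring
    rw [← hTM]
    exact key M le_rfl
  have hper : ∀ j ∈ Finset.Icc 1 M,
      ((t j : ℝ) - (t (j - 1) : ℝ)) * ((1 / 2) * Real.exp (-((t (j - 1) : ℝ) * Δ ^ 2) / 2))
        ≤ ∑ n ∈ Finset.Ico (t (j - 1)) (t j), (e₁ n + e₂ n) := by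
    intro j hj
    rw [Finset.mem_Icc] at hj
    have hstep : ∀ n ∈ Finset.Ico (t (j - 1)) (t j),
        (1 / 2 : ℝ) * Real.exp (-((t (j - 1) : ℝ) * Δ ^ 2) / 2) ≤ e₁ n + e₂ n := by
      intro n hn
      rw [Finset.mem_Ico] at hn
      have hnT : n < T := lt_of_lt_of_le hn.2 (hTle j hj.2)
      obtain ⟨S, hSm, hSiff⟩ := hrep j hj.1 hj.2 ⟨n, hnT⟩ hn.1 hn.2
      have hpr := per_round π Δ hA (hTle (j - 1) (by omega)) ⟨n, hnT⟩ ⟨S, hSm, hSiff⟩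
      rw [he₁, he₂]
      simp only [dif_pos hnT]
      exact hpr
    have hcs := Finset.card_nsmul_le_sum (Finset.Ico (t (j - 1)) (t j))
      (fun n => e₁ n + e₂ n) _ hstep
    rw [Nat.card_Ico, nsmul_eq_mul] at hcs
    calc ((t j : ℝ) - (t (j - 1) : ℝ))
          * ((1 / 2) * Real.exp (-((t (j - 1) : ℝ) * Δ ^ 2) / 2))
        = ((t j - t (j - 1) : ℕ) : ℝ)
          * ((1 / 2) * Real.exp (-((t (j - 1) : ℝ) * Δ ^ 2) / 2)) := by
          rw [Nat.cast_sub (htmono (j - 1) j (by omega) hj.2)]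
      _ ≤ ∑ n ∈ Finset.Ico (t (j - 1)) (t j), (e₁ n + e₂ n) := hcs
  set c : ℕ → ℝ := fun j => ((t j : ℝ) - (t (j - 1) : ℝ)) * (1 / 4)
    * Real.exp (-((t (j - 1) : ℝ) * Δ ^ 2) / 2) with hc
  have hsum : ∑ j ∈ Finset.Icc 1 M, 2 * c j ≤ ∑ n ∈ Finset.range T, (e₁ n + e₂ n) := by
    rw [hdec fun n => e₁ n + e₂ n]
    apply Finset.sum_le_sum
    intro j hj
    calc 2 * c j = ((t j : ℝ) - (t (j - 1) : ℝ))
          * ((1 / 2) * Real.exp (-((t (j - 1) : ℝ) * Δ ^ 2) / 2)) := by rw [hc]; ring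
      _ ≤ _ := hper j hj
  have hsum2 : 2 * ∑ j ∈ Finset.Icc 1 M, c j ≤ ∑ n ∈ Finset.range T, (e₁ n + e₂ n) := by
    rw [Finset.mul_sum]
    exact hsum
  have hR12 : (Δ * ∑ u : Fin T, ((env T Δ true) {ω | π u ω ≠ true}).toReal)
      + (Δ * ∑ u : Fin T, ((env T Δ false) {ω | π u ω ≠ false}).toReal)
      = Δ * ∑ n ∈ Finset.range T, (e₁ n + e₂ n) := by
    rw [hs1, hs2, Finset.sum_add_distrib]
    ring
  have h1 : Δ * ∑ j ∈ Finset.Icc 1 M, c j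
      ≤ ((Δ * ∑ u : Fin T, ((env T Δ true) {ω | π u ω ≠ true}).toReal)
        + (Δ * ∑ u : Fin T, ((env T Δ false) {ω | π u ω ≠ false}).toReal)) / 2 := by
    rw [hR12]
    have h2 : ∑ j ∈ Finset.Icc 1 M, c j ≤ (∑ n ∈ Finset.range T, (e₁ n + e₂ n)) / 2 := by
      linarith
    calc Δ * ∑ j ∈ Finset.Icc 1 M, c j
        ≤ Δ * ((∑ n ∈ Finset.range T, (e₁ n + e₂ n)) / 2) :=
          mul_le_mul_of_nonneg_left h2 (le_of_lt hΔ0)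
      _ = (Δ * ∑ n ∈ Finset.range T, (e₁ n + e₂ n)) / 2 := by ring
  have hmax : ∀ x y : ℝ, (x + y) / 2 ≤ max x y := by
    intro x y
    rcases le_total x y with h | h
    · rw [max_eq_right h]; linarith
    · rw [max_eq_left h]; linarith
  exact le_trans h1 (hmax _ _)
end
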